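/- arXiv:1902.05798 — 4 statements merged into one kernel-verified Lean document; each statement's English description precedes it below -/
import Mathlib

section
/- Let α₁ ∈ (0,1) be an irrational real number, and define recursively α_{n+1} = 1 − ⌊1/α_n⌋·α_n for n = 1, 2, …, where ⌊·⌋ is the floor function. Then every α_n is a well-defined irrational number in (0,1), the sequence (α_n) is strictly decreasing, and lim_{n→∞} α_n = 0. -/
lemma step0 {α : ℝ} (h : α ∈ Set.Ioo (0:ℝ) 1) (hirr : Irrational α) :
    Irrational (1 - (⌊1/α⌋:ℝ) * α) ∧
    1 - (⌊1/α⌋:ℝ) * α ∈ Set.Ioo (0:ℝ) α ∧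
    1 - (⌊1/α⌋:ℝ) * α < 1 / ((⌊1/α⌋:ℝ) + 1) := by
  obtain ⟨h0, h1⟩ := h
  have hinv : Irrational (1/α) := by
    rw [one_div]; exact hirr.inv
  have hgt : 1 < 1/α := (one_lt_div h0).mpr h1
  have hk1 : 1 ≤ ⌊1/α⌋ := Int.le_floor.mpr (by exact_mod_cast hgt.le)
  have klt : (⌊1/α⌋:ℝ) < 1/α := (Int.floor_le _).lt_of_ne ((hinv.ne_int _).symm)
  have hub : 1/α < (⌊1/α⌋:ℝ) + 1 := Int.lt_floor_add_one _
  have h2 : 1 < ((⌊1/α⌋:ℝ) + 1) * α := by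
    have := (div_lt_iff₀ h0).mp hub; linarith
  have h3 : (⌊1/α⌋:ℝ) * α < 1 := by
    have := (lt_div_iff₀ h0).mp klt; linarith
  have hkr : (1:ℝ) ≤ (⌊1/α⌋:ℝ) := by exact_mod_cast hk1
  refine ⟨?_, ⟨by linarith, by nlinarith⟩, ?_⟩
  · have hmul : Irrational ((⌊1/α⌋:ℝ) * α) :=
      hirr.intCast_mul (by omega)
    have := hmul.ratCast_sub (q := 1)
    simpa using this
  · rw [lt_div_iff₀ (by linarith)]
    nlinarith

/-- Starting from an irrational `a 0 ∈ (0,1)` and iterating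
`a (n+1) = 1 - ⌊1 / a n⌋ * a n`, every term is a well-defined irrational number in `(0,1)`,
the sequence is strictly decreasing, and it tends to `0`. -/
theorem stmt0 (a : ℕ → ℝ)
    (h0 : a 0 ∈ Set.Ioo (0 : ℝ) 1) (hirr : Irrational (a 0))
    (hrec : ∀ n : ℕ, a (n + 1) = 1 - (⌊1 / a n⌋ : ℝ) * a n) :
    (∀ n : ℕ, Irrational (a n) ∧ a n ∈ Set.Ioo (0 : ℝ) 1) ∧
    (∀ n : ℕ, a (n + 1) < a n) ∧
    Filter.Tendsto a Filter.atTop (nhds 0) := by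
  have key : ∀ n : ℕ, Irrational (a n) ∧ a n ∈ Set.Ioo (0 : ℝ) 1 := by
    intro n
    induction n with
    | zero => exact ⟨hirr, h0⟩
    | succ n ih =>
      obtain ⟨hi, hm⟩ := ih
      obtain ⟨s1, s2, _⟩ := step0 hm hi
      rw [hrec]
      exact ⟨s1, s2.1, s2.2.trans hm.2⟩
  have dec : ∀ n : ℕ, a (n + 1) < a n := by
    intro n
    obtain ⟨hi, hm⟩ := key n
    obtain ⟨_, s2, _⟩ := step0 hm hi
    rw [hrec]
    exact s2.2
  have bound : ∀ n : ℕ, a n < 1 / ((n : ℝ) + 1) := by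
    intro n
    induction n with
    | zero => simpa using (key 0).2.2
    | succ n ih =>
      obtain ⟨hi, hm⟩ := key n
      obtain ⟨_, _, s3⟩ := step0 hm hi
      have hp : (0:ℝ) < a n := hm.1
      have hfl : (n : ℤ) + 1 ≤ ⌊1 / a n⌋ := by
        apply Int.le_floor.mpr
        have : (n : ℝ) + 1 < 1 / a n := by
          rw [lt_div_iff₀ hp]
          have h4 : a n * ((n:ℝ) + 1) < 1 :=
            (lt_div_iff₀ (by positivity : (0:ℝ) < (n:ℝ) + 1)).mp ih
          nlinarith
        push_cast
        linarith
      have hfl' : (n : ℝ) + 1 ≤ (⌊1 / a n⌋ : ℝ) := by exact_mod_cast hfl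
      have : 1 / ((⌊1 / a n⌋ : ℝ) + 1) ≤ 1 / ((n : ℝ) + 2) :=
        one_div_le_one_div_of_le (by positivity) (by linarith)
      rw [hrec]
      push_cast
      calc 1 - (⌊1 / a n⌋ : ℝ) * a n < 1 / ((⌊1 / a n⌋ : ℝ) + 1) := s3
        _ ≤ 1 / ((n : ℝ) + 2) := this
        _ = 1 / ((n : ℝ) + 1 + 1) := by ring_nf
  refine ⟨key, dec, ?_⟩
  apply squeeze_zero (fun n => (key n).2.1.le) (fun n => (bound n).le)
  exact tendsto_one_div_add_atTop_nhds_zero_nat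
end

section
/- Let Ω, λ, u be as in the context, let x₀ ∈ Ω and h > 0 be such that the closed disk {x ∈ ℝ² : |x − x₀| ≤ h} is contained in Ω. Let α ∈ (0,1) be irrational, let θ⁻, θ⁺ be angles with θ⁺ − θ⁻ = 2πα, and set Γ_h^± = {x₀ + r(cos θ^±, sin θ^±) : 0 ≤ r ≤ h}. If u = 0 on both Γ_h^+ and Γ_h^− (i.e., both segments are nodal lines of u), then u has infinite vanishing order at x₀: every partial derivative of u of every order vanishes at x₀ (equivalently, u ≡ 0 on a neighborhood of x₀). -/
open Filter Topology
namespace NodalAux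

noncomputable def pdv (v : ℝ × ℝ) (f : ℝ × ℝ → ℂ) : ℝ × ℝ → ℂ := fun x => fderiv ℝ f x v
noncomputable def pds (L : List (ℝ × ℝ)) (f : ℝ × ℝ → ℂ) : ℝ × ℝ → ℂ := L.foldr pdv f

lemma pds_append (L M : List (ℝ × ℝ)) (f : ℝ × ℝ → ℂ) :
    pds (L ++ M) f = pds L (pds M f) := List.foldr_append ..

variable {Ω : Set (ℝ × ℝ)}

lemma analytic_pdv {f : ℝ × ℝ → ℂ} (hf : AnalyticOnNhd ℝ f Ω) (v : ℝ × ℝ) :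
    AnalyticOnNhd ℝ (pdv v f) Ω := fun x hx =>
  ((ContinuousLinearMap.apply ℝ ℂ v).analyticAt _).comp (hf.fderiv x hx)

lemma analytic_pds {f : ℝ × ℝ → ℂ} (hf : AnalyticOnNhd ℝ f Ω) (L : List (ℝ × ℝ)) :
    AnalyticOnNhd ℝ (pds L f) Ω := by
  induction L with
  | nil => exact hf
  | cons v L ih => exact analytic_pdv ih v

lemma pdv_congr {f g : ℝ × ℝ → ℂ} {x : ℝ × ℝ} (hfg : f =ᶠ[𝓝 x] g) (v : ℝ × ℝ) :
    pdv v f x = pdv v g x := by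
  simp only [pdv, hfg.fderiv_eq]

lemma pds_zero_fn (L : List (ℝ × ℝ)) : pds L (fun _ => (0 : ℂ)) = fun _ => 0 := by
  induction L with
  | nil => rfl
  | cons v L ih =>
    show pdv v (pds L fun _ => 0) = _
    rw [ih]
    funext x
    simp [pdv]

lemma pds_congr (hΩ : IsOpen Ω) {f g : ℝ × ℝ → ℂ} (hfg : ∀ x ∈ Ω, f x = g x)
    (L : List (ℝ × ℝ)) : ∀ x ∈ Ω, pds L f x = pds L g x := by
  induction L with
  | nil => exact hfg
  | cons v L ih =>
    intro x hx
    exact pdv_congr (eventually_of_mem (hΩ.mem_nhds hx) (fun y hy => ih y hy)) v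

lemma pds_add (hΩ : IsOpen Ω) {f g : ℝ × ℝ → ℂ} (hf : AnalyticOnNhd ℝ f Ω)
    (hg : AnalyticOnNhd ℝ g Ω) (L : List (ℝ × ℝ)) :
    ∀ x ∈ Ω, pds L (fun y => f y + g y) x = pds L f x + pds L g x := by
  induction L with
  | nil => exact fun x _ => rfl
  | cons v L ih =>
    intro x hx
    have h1 : pds L (fun y => f y + g y) =ᶠ[𝓝 x] fun y => pds L f y + pds L g y :=
      eventually_of_mem (hΩ.mem_nhds hx) (fun y hy => ih y hy)
    show pdv v (pds L (fun y => f y + g y)) x = pds (v :: L) f x + pds (v :: L) g x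
    rw [pdv_congr h1 v]
    show fderiv ℝ (fun y => pds L f y + pds L g y) x v = _
    rw [fderiv_fun_add ((analytic_pds hf L x hx).differentiableAt)
      ((analytic_pds hg L x hx).differentiableAt)]
    rfl

lemma pds_const_mul (hΩ : IsOpen Ω) {f : ℝ × ℝ → ℂ} (hf : AnalyticOnNhd ℝ f Ω) (c : ℂ)
    (L : List (ℝ × ℝ)) :
    ∀ x ∈ Ω, pds L (fun y => c * f y) x = c * pds L f x := by
  induction L with
  | nil => exact fun x _ => rfl
  | cons v L ih =>
    intro x hx
    have h1 : pds L (fun y => c * f y) =ᶠ[𝓝 x] fun y => c * pds L f y :=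
      eventually_of_mem (hΩ.mem_nhds hx) (fun y hy => ih y hy)
    show pdv v (pds L (fun y => c * f y)) x = c * pds (v :: L) f x
    rw [pdv_congr h1 v]
    show fderiv ℝ (fun y => c * pds L f y) x v = _
    rw [fderiv_const_mul ((analytic_pds hf L x hx).differentiableAt) c]
    rfl

/-- Schwarz symmetry for analytic functions -/
lemma pdv_comm {f : ℝ × ℝ → ℂ} (hΩ : IsOpen Ω) (hf : AnalyticOnNhd ℝ f Ω)
    (v w : ℝ × ℝ) {x : ℝ × ℝ} (hx : x ∈ Ω) :
    pdv v (pdv w f) x = pdv w (pdv v f) x := by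
  have hsym : IsSymmSndFDerivAt ℝ f x := by
    have : ContDiffAt ℝ 2 f x := (hf x hx).contDiffAt.of_le le_top
    exact this.isSymmSndFDerivAt (by simp)
  have hd : ∀ᶠ y in 𝓝 x, DifferentiableAt ℝ f y := by
    filter_upwards [hΩ.mem_nhds hx] with y hy using (hf y hy).differentiableAt
  have key : ∀ a b : ℝ × ℝ, pdv a (pdv b f) x = fderiv ℝ (fderiv ℝ f) x a b := by
    intro a b
    have : pdv b f =ᶠ[𝓝 x] (fun y => (ContinuousLinearMap.apply ℝ ℂ b) (fderiv ℝ f y)) := by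
      filter_upwards with y using rfl
    rw [pdv, this.fderiv_eq]
    have hdf : DifferentiableAt ℝ (fderiv ℝ f) x := (hf.fderiv x hx).differentiableAt
    rw [show (fun y => (ContinuousLinearMap.apply ℝ ℂ b) (fderiv ℝ f y))
        = (⇑(ContinuousLinearMap.apply ℝ ℂ b) ∘ fderiv ℝ f) from rfl,
      fderiv_comp x ((ContinuousLinearMap.apply ℝ ℂ b).differentiableAt) hdf]
    simp
  rw [key v w, key w v, hsym.eq v w]

/-- permutation invariance -/
lemma pds_perm (hΩ : IsOpen Ω) {f : ℝ × ℝ → ℂ} (hf : AnalyticOnNhd ℝ f Ω)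
    {L₁ L₂ : List (ℝ × ℝ)} (hp : L₁.Perm L₂) : ∀ x ∈ Ω, pds L₁ f x = pds L₂ f x := by
  induction hp with
  | nil => exact fun x _ => rfl
  | cons v _ ih =>
    intro x hx
    exact pdv_congr (eventually_of_mem (hΩ.mem_nhds hx) (fun y hy => ih y hy)) v
  | swap v w L =>
    intro x hx
    exact pdv_comm hΩ (analytic_pds hf L) w v hx
  | trans _ _ ih1 ih2 =>
    intro x hx
    rw [ih1 x hx, ih2 x hx]


/-- `iteratedFDeriv` equals `pds` on the vector list. -/
lemma iteratedFDeriv_eq_pds (hΩ : IsOpen Ω) :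
    ∀ (n : ℕ) (f : ℝ × ℝ → ℂ), AnalyticOnNhd ℝ f Ω → ∀ x ∈ Ω, ∀ m : Fin n → ℝ × ℝ,
      iteratedFDeriv ℝ n f x m = pds (List.ofFn m) f x := by
  intro n
  induction n with
  | zero => intro f hf x hx m; simp [pds, iteratedFDeriv_zero_apply]
  | succ n ih =>
    intro f hf x hx m
    have h1 : iteratedFDeriv ℝ (n + 1) f x m
        = iteratedFDeriv ℝ n (fderiv ℝ f) x (Fin.init m) (m (Fin.last n)) :=
      iteratedFDeriv_succ_apply_right m
    have h2 : iteratedFDeriv ℝ n (pdv (m (Fin.last n)) f) x (Fin.init m)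
        = iteratedFDeriv ℝ n (fderiv ℝ f) x (Fin.init m) (m (Fin.last n)) := by
      have hcd : ContDiffOn ℝ (⊤ : WithTop ℕ∞) (fderiv ℝ f) Ω := (hf.fderiv).contDiffOn (n := ⊤) hΩ.uniqueDiffOn
      have := (ContinuousLinearMap.apply ℝ ℂ (m (Fin.last n))).iteratedFDerivWithin_comp_left
        (f := fderiv ℝ f) (hcd x hx) hΩ.uniqueDiffOn hx (le_top (a := (n : WithTop ℕ∞)))
      rw [← iteratedFDerivWithin_of_isOpen n hΩ hx, ← iteratedFDerivWithin_of_isOpen n hΩ hx,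
        show pdv (m (Fin.last n)) f
          = (⇑(ContinuousLinearMap.apply ℝ ℂ (m (Fin.last n))) ∘ fderiv ℝ f) from rfl, this]
      rfl
    rw [h1, ← h2, ih _ (analytic_pdv hf _) x hx (Fin.init m)]
    have h3 : List.ofFn m = List.ofFn (Fin.init m) ++ [m (Fin.last n)] := by
      rw [List.ofFn_succ', List.concat_eq_append]
      rfl
    rw [h3, show pds (List.ofFn (Fin.init m) ++ [m (Fin.last n)]) f
      = pds (List.ofFn (Fin.init m)) (pds [m (Fin.last n)] f) from List.foldr_append ..]
    rfl

end NodalAux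

namespace NodalAux2
open NodalAux Finset

lemma iteratedDeriv_line {Ω : Set (ℝ × ℝ)} (hΩ : IsOpen Ω) {f : ℝ × ℝ → ℂ}
    (hf : AnalyticOnNhd ℝ f Ω) (x₀ v : ℝ × ℝ) :
    ∀ n : ℕ, ∀ t : ℝ, x₀ + t • v ∈ Ω →
      iteratedDeriv n (fun s : ℝ => f (x₀ + s • v)) t
        = pds (List.replicate n v) f (x₀ + t • v) := by
  intro n
  induction n with
  | zero => intro t ht; simp [iteratedDeriv_zero, pds]
  | succ n ih =>
    intro t ht
    rw [iteratedDeriv_succ]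
    have hS : IsOpen {s : ℝ | x₀ + s • v ∈ Ω} := by
      apply hΩ.preimage
      fun_prop
    have h1 : iteratedDeriv n (fun s : ℝ => f (x₀ + s • v))
        =ᶠ[𝓝 t] fun s => pds (List.replicate n v) f (x₀ + s • v) :=
      eventually_of_mem (hS.mem_nhds ht) (fun s hs => ih s hs)
    rw [h1.deriv_eq]
    have hline : HasDerivAt (fun s : ℝ => x₀ + s • v) v t := by
      simpa using ((hasDerivAt_id t).smul_const v).const_add x₀
    have hg : DifferentiableAt ℝ (pds (List.replicate n v) f) (x₀ + t • v) :=
      (analytic_pds hf _ _ ht).differentiableAt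
    rw [show (fun s : ℝ => pds (List.replicate n v) f (x₀ + s • v))
        = (pds (List.replicate n v) f ∘ fun s : ℝ => x₀ + s • v) from rfl,
      (hg.hasFDerivAt.comp_hasDerivAt t hline).deriv]
    rfl

lemma pdv_eval (f : ℝ × ℝ → ℂ) (x : ℝ × ℝ) (a b : ℝ) :
    pdv (a, b) f x = (a : ℂ) * pdv (1, 0) f x + (b : ℂ) * pdv (0, 1) f x := by
  have hv : ((a, b) : ℝ × ℝ) = a • ((1, 0) : ℝ × ℝ) + b • ((0, 1) : ℝ × ℝ) := by
    simp [Prod.ext_iff]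
  show fderiv ℝ f x (a, b) = _
  rw [hv, map_add, map_smul, map_smul]
  simp [pdv, Complex.real_smul]

lemma pdv_sum {ι : Type*} (v : ℝ × ℝ) (s : Finset ι) (c : ι → ℂ) (F : ι → ℝ × ℝ → ℂ)
    {x : ℝ × ℝ} (hF : ∀ i ∈ s, DifferentiableAt ℝ (F i) x) :
    pdv v (fun y => ∑ i ∈ s, c i * F i y) x = ∑ i ∈ s, c i * pdv v (F i) x := by
  show fderiv ℝ _ x v = _
  rw [fderiv_fun_sum (fun i hi => (hF i hi).const_mul (c i))]
  rw [ContinuousLinearMap.sum_apply]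
  exact Finset.sum_congr rfl fun i hi => by
    rw [fderiv_const_mul (hF i hi) (c i)]; rfl

lemma pascal_sum (n : ℕ) (a b : ℂ) (g : ℕ → ℂ) :
    ∑ j ∈ range (n + 1), (n.choose j : ℂ) * a ^ j * b ^ (n - j) * (a * g (j + 1) + b * g j)
      = ∑ j ∈ range (n + 2), ((n + 1).choose j : ℂ) * a ^ j * b ^ (n + 1 - j) * g j := by
  have hR : ∑ j ∈ range (n + 2), ((n + 1).choose j : ℂ) * a ^ j * b ^ (n + 1 - j) * g j
      = (∑ j ∈ range (n + 1), ((n.choose j : ℂ) + (n.choose (j+1) : ℂ))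
          * a ^ (j + 1) * b ^ (n - j) * g (j + 1))
        + b ^ (n + 1) * g 0 := by
    rw [Finset.sum_range_succ' (fun j => ((n + 1).choose j : ℂ) * a ^ j * b ^ (n + 1 - j) * g j)]
    congr 1
    · refine Finset.sum_congr rfl fun j hj => ?_
      have e : n + 1 - (j + 1) = n - j := by omega
      rw [Nat.choose_succ_succ, e]
      push_cast
      ring
    · simp
  have hL : ∑ j ∈ range (n + 1), (n.choose j : ℂ) * a ^ j * b ^ (n - j)
        * (a * g (j + 1) + b * g j)
      = (∑ j ∈ range (n + 1), (n.choose j : ℂ) * a ^ (j + 1) * b ^ (n - j) * g (j + 1))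
        + ∑ j ∈ range (n + 1), (n.choose j : ℂ) * a ^ j * b ^ (n - j + 1) * g j := by
    rw [← Finset.sum_add_distrib]
    refine Finset.sum_congr rfl fun j hj => ?_
    ring
  rw [hL, hR]
  have h2 : ∑ j ∈ range (n + 1), (n.choose j : ℂ) * a ^ j * b ^ (n - j + 1) * g j
      = (∑ j ∈ range n, (n.choose (j + 1) : ℂ) * a ^ (j + 1) * b ^ (n - j) * g (j + 1))
        + b ^ (n + 1) * g 0 := by
    rw [Finset.sum_range_succ' (fun j => (n.choose j : ℂ) * a ^ j * b ^ (n - j + 1) * g j)]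
    congr 1
    · refine Finset.sum_congr rfl fun j hj => ?_
      simp only [mem_range] at hj
      have e : n - (j + 1) + 1 = n - j := by omega
      rw [e]
    · simp
  have h3 : ∑ j ∈ range (n + 1), (n.choose (j + 1) : ℂ) * a ^ (j + 1) * b ^ (n - j) * g (j + 1)
      = ∑ j ∈ range n, (n.choose (j + 1) : ℂ) * a ^ (j + 1) * b ^ (n - j) * g (j + 1) := by
    rw [Finset.sum_range_succ]
    simp
  have h4 : ∀ j ∈ range (n + 1),
      ((n.choose j : ℂ) + (n.choose (j + 1) : ℂ)) * a ^ (j + 1) * b ^ (n - j) * g (j + 1)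
        = (n.choose j : ℂ) * a ^ (j + 1) * b ^ (n - j) * g (j + 1)
          + (n.choose (j + 1) : ℂ) * a ^ (j + 1) * b ^ (n - j) * g (j + 1) := fun j _ => by ring
  rw [Finset.sum_congr rfl h4, Finset.sum_add_distrib, h2, h3]
  ring

end NodalAux2

namespace NodalAux3
open NodalAux NodalAux2 Finset

/-- binomial expansion of repeated directional derivatives -/
lemma bin {Ω : Set (ℝ × ℝ)} (hΩ : IsOpen Ω) {f : ℝ × ℝ → ℂ} (hf : AnalyticOnNhd ℝ f Ω) :
    ∀ (n : ℕ) (a b : ℝ), ∀ x ∈ Ω,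
      pds (List.replicate n ((a, b) : ℝ × ℝ)) f x
        = ∑ j ∈ range (n + 1), (n.choose j : ℂ) * (a : ℂ) ^ j * (b : ℂ) ^ (n - j) *
            pds (List.replicate j ((1:ℝ), (0:ℝ)) ++ List.replicate (n - j) ((0:ℝ), (1:ℝ))) f x := by
  intro n
  induction n with
  | zero => intro a b x hx; simp [pds]
  | succ n ih =>
    intro a b x hx
    have h1 : pds (List.replicate n ((a, b) : ℝ × ℝ)) f =ᶠ[𝓝 x]
        fun y => ∑ j ∈ range (n + 1), (n.choose j : ℂ) * (a : ℂ) ^ j * (b : ℂ) ^ (n - j) *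
          pds (List.replicate j ((1:ℝ), (0:ℝ)) ++ List.replicate (n - j) ((0:ℝ), (1:ℝ))) f y :=
      eventually_of_mem (hΩ.mem_nhds hx) (fun y hy => ih a b y hy)
    have step1 : pds (List.replicate (n+1) ((a, b) : ℝ × ℝ)) f x
        = ∑ j ∈ range (n + 1), (n.choose j : ℂ) * (a : ℂ) ^ j * (b : ℂ) ^ (n - j) *
            pdv (a, b) (pds (List.replicate j ((1:ℝ), (0:ℝ))
              ++ List.replicate (n - j) ((0:ℝ), (1:ℝ))) f) x := by
      calc pds (List.replicate (n+1) ((a, b) : ℝ × ℝ)) f x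
          = pdv (a, b) (pds (List.replicate n ((a, b) : ℝ × ℝ)) f) x := rfl
        _ = pdv (a, b) (fun y => ∑ j ∈ range (n + 1),
              (n.choose j : ℂ) * (a : ℂ) ^ j * (b : ℂ) ^ (n - j) *
              pds (List.replicate j ((1:ℝ), (0:ℝ))
                ++ List.replicate (n - j) ((0:ℝ), (1:ℝ))) f y) x := pdv_congr h1 _
        _ = _ := pdv_sum _ _ _ _ (fun j _ => (analytic_pds hf _ x hx).differentiableAt)
    rw [step1]
    have step2 : ∀ j ∈ range (n + 1),
        (n.choose j : ℂ) * (a : ℂ) ^ j * (b : ℂ) ^ (n - j) *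
          pdv (a, b) (pds (List.replicate j ((1:ℝ), (0:ℝ))
            ++ List.replicate (n - j) ((0:ℝ), (1:ℝ))) f) x
        = (n.choose j : ℂ) * (a : ℂ) ^ j * (b : ℂ) ^ (n - j) *
            ((a : ℂ) * pds (List.replicate (j+1) ((1:ℝ), (0:ℝ))
                ++ List.replicate (n + 1 - (j+1)) ((0:ℝ), (1:ℝ))) f x
              + (b : ℂ) * pds (List.replicate j ((1:ℝ), (0:ℝ))
                ++ List.replicate (n + 1 - j) ((0:ℝ), (1:ℝ))) f x) := by
      intro j hj
      simp only [mem_range] at hj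
      have e1 : n + 1 - (j + 1) = n - j := Nat.succ_sub_succ n j
      have e2 : n + 1 - j = n - j + 1 := by omega
      rw [pdv_eval, e1, e2]
      have hb : pdv (0, 1) (pds (List.replicate j ((1:ℝ), (0:ℝ))
            ++ List.replicate (n - j) ((0:ℝ), (1:ℝ))) f) x
          = pds (List.replicate j ((1:ℝ), (0:ℝ))
            ++ List.replicate (n - j + 1) ((0:ℝ), (1:ℝ))) f x := by
        show pds (((0:ℝ), (1:ℝ)) :: (List.replicate j ((1:ℝ), (0:ℝ))
            ++ List.replicate (n - j) ((0:ℝ), (1:ℝ)))) f x = _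
        exact pds_perm hΩ hf List.perm_middle.symm x hx
      rw [hb]
      rfl
    rw [Finset.sum_congr rfl step2]
    exact pascal_sum n a b (fun j => pds (List.replicate j ((1:ℝ), (0:ℝ))
      ++ List.replicate (n + 1 - j) ((0:ℝ), (1:ℝ))) f x)

open Complex in
lemma alt_rep (n : ℕ) (hn : 1 ≤ n) (b : ℕ → ℂ)
    (halt : ∀ j, j + 2 ≤ n → b (j + 2) = -b j) :
    ∃ z w : ℂ, ∀ j ≤ n, b j = z * I ^ (n - j) + w * (-I) ^ (n - j) := by
  refine ⟨(b 0 + I * b 1) / (2 * I * I ^ (n - 1)),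
          (I * b 1 - b 0) / (2 * I * (-I) ^ (n - 1)), ?_⟩
  intro j
  induction j using Nat.strong_induction_on with
  | _ j IH =>
    match j with
    | 0 =>
      intro _
      rw [show n - 0 = (n - 1) + 1 by omega, pow_succ, pow_succ]
      have h1 : (I : ℂ) ^ (n - 1) ≠ 0 := pow_ne_zero _ I_ne_zero
      have h2 : ((-I) : ℂ) ^ (n - 1) ≠ 0 := pow_ne_zero _ (neg_ne_zero.mpr I_ne_zero)
      field_simp
      ring
    | 1 =>
      intro _
      rw [show n - 1 = n - 1 from rfl]
      have h1 : (I : ℂ) ^ (n - 1) ≠ 0 := pow_ne_zero _ I_ne_zero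
      have h2 : ((-I) : ℂ) ^ (n - 1) ≠ 0 := pow_ne_zero _ (neg_ne_zero.mpr I_ne_zero)
      field_simp
      ring
    | (j + 2) =>
      intro hj
      rw [halt j hj, IH j (by omega) (by omega),
        show n - j = (n - (j + 2)) + 2 by omega, pow_add, pow_add]
      have hn2 : ((-I) : ℂ) ^ 2 = -1 := by rw [neg_sq, I_sq]
      rw [I_sq, hn2]
      ring

open Complex in
lemma trig_zero (n : ℕ) (z w : ℂ) (θ : ℝ)
    (hsum : ∑ j ∈ Finset.range (n + 1), (n.choose j : ℂ) * (Real.cos θ : ℂ) ^ j *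
        (Real.sin θ : ℂ) ^ (n - j) * (z * I ^ (n - j) + w * (-I) ^ (n - j)) = 0) :
    z * Complex.exp (n * θ * I) + w * Complex.exp (-(n * θ * I)) = 0 := by
  have key : ∑ j ∈ Finset.range (n + 1), (n.choose j : ℂ) * (Real.cos θ : ℂ) ^ j *
        (Real.sin θ : ℂ) ^ (n - j) * (z * I ^ (n - j) + w * (-I) ^ (n - j))
      = z * ((Real.cos θ : ℂ) + (Real.sin θ : ℂ) * I) ^ n
        + w * ((Real.cos θ : ℂ) + (-(Real.sin θ : ℂ)) * I) ^ n := by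
    rw [add_pow, add_pow, Finset.mul_sum, Finset.mul_sum, ← Finset.sum_add_distrib]
    refine Finset.sum_congr rfl fun j hj => ?_
    rw [mul_pow, mul_pow]
    ring
  rw [key] at hsum
  have e1 : ((Real.cos θ : ℂ) + (Real.sin θ : ℂ) * I) ^ n = Complex.exp (n * θ * I) := by
    have harg : ((n : ℂ) * θ * I) = (n : ℂ) * ((θ : ℂ) * I) := by ring
    rw [harg, Complex.exp_nat_mul, Complex.exp_mul_I, Complex.ofReal_cos, Complex.ofReal_sin]
  have e2 : ((Real.cos θ : ℂ) + (-(Real.sin θ : ℂ)) * I) ^ n = Complex.exp (-(n * θ * I)) := by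
    have harg : (-((n : ℂ) * θ * I)) = (n : ℂ) * ((-θ : ℝ) * I) := by push_cast; ring
    rw [harg, Complex.exp_nat_mul, Complex.exp_mul_I, Complex.ofReal_neg, Complex.cos_neg,
      Complex.sin_neg, ← Complex.ofReal_cos, ← Complex.ofReal_sin]
  rw [e1, e2] at hsum
  exact hsum


end NodalAux3


/-- First partial derivative of `u : ℝ × ℝ → ℂ` in the `x₁` direction. -/
noncomputable def pd1 (u : ℝ × ℝ → ℂ) : ℝ × ℝ → ℂ := fun x => fderiv ℝ u x (1, 0)

/-- First partial derivative of `u : ℝ × ℝ → ℂ` in the `x₂` direction. -/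
noncomputable def pd2 (u : ℝ × ℝ → ℂ) : ℝ × ℝ → ℂ := fun x => fderiv ℝ u x (0, 1)

noncomputable def ccf (u : ℝ × ℝ → ℂ) (x₀ : ℝ × ℝ) (j k : ℕ) : ℂ :=
  NodalAux.pds (List.replicate j ((1:ℝ),(0:ℝ)) ++ List.replicate k ((0:ℝ),(1:ℝ))) u x₀

open NodalAux NodalAux2 NodalAux3 Finset in
/-- Two nodal lines of a Laplacian eigenfunction intersecting at `x₀ ∈ Ω` at an irrational
angle `2πα`: the eigenfunction has infinite vanishing order at `x₀`. -/
theorem stmt1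
    (Ω : Set (ℝ × ℝ)) (hΩ : IsOpen Ω)
    (lam : ℝ) (hlam : 0 < lam)
    (u : ℝ × ℝ → ℂ)
    (hu_an : AnalyticOnNhd ℝ u Ω)
    (hu_eq : ∀ x ∈ Ω, pd1 (pd1 u) x + pd2 (pd2 u) x + (lam : ℂ) * u x = 0)
    (x₀ : ℝ × ℝ) (hx₀ : x₀ ∈ Ω)
    (h : ℝ) (hh : 0 < h)
    (hdisk : ∀ x : ℝ × ℝ, (x.1 - x₀.1) ^ 2 + (x.2 - x₀.2) ^ 2 ≤ h ^ 2 → x ∈ Ω)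
    (α : ℝ) (hα : α ∈ Set.Ioo (0 : ℝ) 1) (hirr : Irrational α)
    (θm θp : ℝ) (hangle : θp - θm = 2 * Real.pi * α)
    (hnodal_p : ∀ r : ℝ, 0 ≤ r → r ≤ h →
      u (x₀.1 + r * Real.cos θp, x₀.2 + r * Real.sin θp) = 0)
    (hnodal_m : ∀ r : ℝ, 0 ≤ r → r ≤ h →
      u (x₀.1 + r * Real.cos θm, x₀.2 + r * Real.sin θm) = 0) :
    ∀ k : ℕ, iteratedFDeriv ℝ k u x₀ = 0 := by
  have hu_eq' : ∀ x ∈ Ω,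
      pdv (1,0) (pdv (1,0) u) x + pdv (0,1) (pdv (0,1) u) x + (lam : ℂ) * u x = 0 := hu_eq
  have ha1 : AnalyticOnNhd ℝ (pdv (1,0) (pdv (1,0) u)) Ω :=
    analytic_pdv (analytic_pdv hu_an _) _
  have ha2 : AnalyticOnNhd ℝ (pdv (0,1) (pdv (0,1) u)) Ω :=
    analytic_pdv (analytic_pdv hu_an _) _
  have ha3 : AnalyticOnNhd ℝ (fun y => (lam : ℂ) * u y) Ω := analyticOnNhd_const.mul hu_an
  -- the PDE recursion on coefficients
  have hrec : ∀ j k : ℕ, ccf u x₀ (j+2) k + ccf u x₀ j (k+2) + (lam : ℂ) * ccf u x₀ j k = 0 := by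
    intro j k
    have hfa : AnalyticOnNhd ℝ
        (fun y => pdv (1,0) (pdv (1,0) u) y + pdv (0,1) (pdv (0,1) u) y) Ω := ha1.add ha2
    set L := List.replicate j ((1:ℝ),(0:ℝ)) ++ List.replicate k ((0:ℝ),(1:ℝ)) with hL
    have h0 : pds L (fun y => pdv (1,0) (pdv (1,0) u) y + pdv (0,1) (pdv (0,1) u) y
        + (lam : ℂ) * u y) x₀ = 0 := by
      rw [pds_congr hΩ (fun x hx => hu_eq' x hx) L x₀ hx₀, pds_zero_fn]
    have s1 : pds L (fun y => pdv (1,0) (pdv (1,0) u) y + pdv (0,1) (pdv (0,1) u) y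
        + (lam : ℂ) * u y) x₀
        = pds L (fun y => pdv (1,0) (pdv (1,0) u) y + pdv (0,1) (pdv (0,1) u) y) x₀
          + pds L (fun y => (lam : ℂ) * u y) x₀ := pds_add hΩ hfa ha3 L x₀ hx₀
    have s2 : pds L (fun y => pdv (1,0) (pdv (1,0) u) y + pdv (0,1) (pdv (0,1) u) y) x₀
        = pds L (pdv (1,0) (pdv (1,0) u)) x₀ + pds L (pdv (0,1) (pdv (0,1) u)) x₀ :=
      pds_add hΩ ha1 ha2 L x₀ hx₀
    have s3 : pds L (fun y => (lam : ℂ) * u y) x₀ = (lam : ℂ) * pds L u x₀ :=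
      pds_const_mul hΩ hu_an ((lam : ℂ)) L x₀ hx₀
    have e1 : pds L (pdv (1,0) (pdv (1,0) u)) x₀ = ccf u x₀ (j+2) k := by
      show pds L (pds [((1:ℝ),(0:ℝ)), ((1:ℝ),(0:ℝ))] u) x₀ = _
      rw [← pds_append]
      have heq : List.replicate (j+2) ((1:ℝ),(0:ℝ)) ++ List.replicate k ((0:ℝ),(1:ℝ))
          = [((1:ℝ),(0:ℝ)), ((1:ℝ),(0:ℝ))] ++ L := by
        rw [hL, show j + 2 = 2 + j by omega, List.replicate_add, List.append_assoc]
        rfl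
      show _ = pds (List.replicate (j+2) ((1:ℝ),(0:ℝ)) ++ List.replicate k ((0:ℝ),(1:ℝ))) u x₀
      rw [heq]
      exact pds_perm hΩ hu_an List.perm_append_comm x₀ hx₀
    have e2 : pds L (pdv (0,1) (pdv (0,1) u)) x₀ = ccf u x₀ j (k+2) := by
      show pds L (pds [((0:ℝ),(1:ℝ)), ((0:ℝ),(1:ℝ))] u) x₀ = _
      rw [← pds_append]
      have heq : L ++ [((0:ℝ),(1:ℝ)), ((0:ℝ),(1:ℝ))]
          = List.replicate j ((1:ℝ),(0:ℝ)) ++ List.replicate (k+2) ((0:ℝ),(1:ℝ)) := by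
        rw [hL, List.append_assoc, show k + 2 = k + 2 from rfl, List.replicate_add]
        rfl
      rw [heq]
      rfl
    have e3 : pds L u x₀ = ccf u x₀ j k := rfl
    rw [s1, s2, s3, e1, e2, e3] at h0
    exact h0
  -- vanishing of directional derivatives along the two rays
  have hray : ∀ θ : ℝ, (∀ r : ℝ, 0 ≤ r → r ≤ h →
      u (x₀.1 + r * Real.cos θ, x₀.2 + r * Real.sin θ) = 0) →
      ∀ n : ℕ, pds (List.replicate n ((Real.cos θ, Real.sin θ) : ℝ × ℝ)) u x₀ = 0 := by
    intro θ hn0 n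
    set v : ℝ × ℝ := (Real.cos θ, Real.sin θ) with hv
    have hconv : ∀ t : ℝ, x₀ + t • v = (x₀.1 + t * Real.cos θ, x₀.2 + t * Real.sin θ) := by
      intro t
      rw [hv]
      ext <;> simp
    have hA : AnalyticAt ℝ (fun t : ℝ => x₀ + t • v) 0 := by
      have : (fun t : ℝ => x₀ + t • v)
          = fun t : ℝ => x₀ + (ContinuousLinearMap.smulRight
              (ContinuousLinearMap.id ℝ ℝ) v) t := rfl
      rw [this]
      exact analyticAt_const.add
        (((ContinuousLinearMap.smulRight (ContinuousLinearMap.id ℝ ℝ) v)).analyticAt 0)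
    have hφa : AnalyticAt ℝ (fun t : ℝ => u (x₀ + t • v)) 0 := by
      apply AnalyticAt.comp (g := u) ?_ hA
      have : x₀ + (0:ℝ) • v = x₀ := by simp
      simpa [this] using hu_an x₀ hx₀
    have hzero : ∀ᶠ t in 𝓝 (0:ℝ), u (x₀ + t • v) = 0 := by
      rcases hφa.eventually_eq_zero_or_eventually_ne_zero with hcase | hcase
      · exact hcase
      · exfalso
        have h1 : ∀ᶠ t in 𝓝[>] (0:ℝ), u (x₀ + t • v) ≠ 0 :=
          hcase.filter_mono (nhdsWithin_mono 0 (fun t ht => ne_of_gt ht))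
        have h2 : ∀ᶠ t in 𝓝[>] (0:ℝ), t < h :=
          eventually_nhdsWithin_of_eventually_nhds (eventually_lt_nhds hh)
        have h3 : ∀ᶠ t in 𝓝[>] (0:ℝ), (0:ℝ) < t := self_mem_nhdsWithin
        obtain ⟨t, ht1, ht2, ht3⟩ := (h1.and (h2.and h3)).exists
        apply ht1
        rw [hconv]
        exact hn0 t ht3.le ht2.le
    have hzero' : (fun t : ℝ => u (x₀ + t • v)) =ᶠ[𝓝 (0:ℝ)] (fun _ => (0:ℂ)) := hzero
    have hiter : ∀ m : ℕ, iteratedDeriv m (fun t : ℝ => u (x₀ + t • v)) 0 = 0 := by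
      intro m
      rw [Filter.EventuallyEq.iteratedDeriv_eq m hzero', iteratedDeriv_eq_iteratedFDeriv]
      simp [iteratedFDeriv_zero_fun]
    have h00 : x₀ + (0:ℝ) • v = x₀ := by simp
    have hline := iteratedDeriv_line hΩ hu_an x₀ v n 0 (by simpa [h00] using hx₀)
    rw [h00, hiter n] at hline
    exact hline.symm
  have key0 : u x₀ = 0 := by
    have h0 := hnodal_p 0 le_rfl hh.le
    simpa using h0
  -- all coefficients vanish
  have hccz : ∀ n : ℕ, ∀ j k : ℕ, j + k = n → ccf u x₀ j k = 0 := by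
    intro n
    induction n using Nat.strong_induction_on with
    | _ n IH =>
    rcases Nat.eq_zero_or_pos n with hn0 | hn1
    · intro j k hjk
      have hj : j = 0 := by omega
      have hk : k = 0 := by omega
      subst hj; subst hk
      exact key0
    · have halt : ∀ j, j + 2 ≤ n →
          ccf u x₀ (j+2) (n - (j+2)) = -(ccf u x₀ j (n - j)) := by
        intro j hj
        have hrec' := hrec j (n - j - 2)
        have hz : ccf u x₀ j (n - j - 2) = 0 := IH (n-2) (by omega) j (n-j-2) (by omega)
        rw [hz, mul_zero, add_zero] at hrec'
        have e1 : n - (j+2) = n - j - 2 := by omega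
        have e2 : n - j - 2 + 2 = n - j := by omega
        rw [e1, ← e2]
        exact eq_neg_of_add_eq_zero_left hrec'
      obtain ⟨z, w, hzw⟩ := alt_rep n hn1 (fun j => ccf u x₀ j (n - j)) halt
      have hzw' : ∀ j ≤ n, ccf u x₀ j (n - j)
          = z * Complex.I ^ (n-j) + w * (-Complex.I) ^ (n-j) := hzw
      -- the two ray equations
      have hraysum : ∀ θ : ℝ,
          pds (List.replicate n ((Real.cos θ, Real.sin θ) : ℝ × ℝ)) u x₀ = 0 →
          z * Complex.exp (n * θ * Complex.I) + w * Complex.exp (-(n * θ * Complex.I)) = 0 := by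
        intro θ h0
        apply trig_zero n z w θ
        have hbin : pds (List.replicate n ((Real.cos θ, Real.sin θ) : ℝ × ℝ)) u x₀
            = ∑ j ∈ range (n + 1), (n.choose j : ℂ) * (Real.cos θ : ℂ) ^ j *
                (Real.sin θ : ℂ) ^ (n - j) * ccf u x₀ j (n - j) :=
          bin hΩ hu_an n (Real.cos θ) (Real.sin θ) x₀ hx₀
        rw [h0] at hbin
        have hcong : ∑ j ∈ range (n + 1), (n.choose j : ℂ) * (Real.cos θ : ℂ) ^ j *
              (Real.sin θ : ℂ) ^ (n - j) * (z * Complex.I ^ (n-j) + w * (-Complex.I) ^ (n-j))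
            = ∑ j ∈ range (n + 1), (n.choose j : ℂ) * (Real.cos θ : ℂ) ^ j *
              (Real.sin θ : ℂ) ^ (n - j) * ccf u x₀ j (n - j) := by
          refine Finset.sum_congr rfl fun j hj => ?_
          rw [hzw' j (by simp only [Finset.mem_range] at hj; omega)]
        rw [hcong, ← hbin]
      have hp0 := hraysum θp (hray θp hnodal_p n)
      have hm0 := hraysum θm (hray θm hnodal_m n)
      -- deduce z = 0 and w = 0
      have hmul : ∀ θ : ℝ,
          z * Complex.exp (n * θ * Complex.I) + w * Complex.exp (-(n * θ * Complex.I)) = 0 →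
          z * Complex.exp ((n : ℂ) * ((θ : ℂ) * Complex.I) + (n : ℂ) * ((θ : ℂ) * Complex.I)) + w = 0 := by
        intro θ h0
        have := congrArg (· * Complex.exp (n * θ * Complex.I)) h0
        simp only [add_mul, zero_mul, mul_assoc, ← Complex.exp_add, neg_add_cancel,
          Complex.exp_zero, mul_one] at this
        exact this
      have hp1 := hmul θp hp0
      have hm1 := hmul θm hm0
      have hsub : z * (Complex.exp ((n : ℂ) * ((θp : ℂ) * Complex.I) + (n : ℂ) * ((θp : ℂ) * Complex.I))
          - Complex.exp ((n : ℂ) * ((θm : ℂ) * Complex.I) + (n : ℂ) * ((θm : ℂ) * Complex.I))) = 0 := by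
        linear_combination hp1 - hm1
      have hzzero : z = 0 := by
        rcases mul_eq_zero.mp hsub with hz | hz
        · exact hz
        · exfalso
          have hexp : Complex.exp ((n : ℂ) * ((θp : ℂ) * Complex.I) + (n : ℂ) * ((θp : ℂ) * Complex.I))
              = Complex.exp ((n : ℂ) * ((θm : ℂ) * Complex.I) + (n : ℂ) * ((θm : ℂ) * Complex.I)) :=
            sub_eq_zero.mp hz
          obtain ⟨kk, hk⟩ := Complex.exp_eq_exp_iff_exists_int.mp hexp
          -- extract the real equation
          have hreal : 2 * (n:ℝ) * θp = 2 * (n:ℝ) * θm + kk * (2 * Real.pi) := by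
            have hI : ((2 * (n:ℝ) * θp : ℝ) : ℂ) * Complex.I
                = ((2 * (n:ℝ) * θm + kk * (2 * Real.pi) : ℝ) : ℂ) * Complex.I := by
              push_cast
              push_cast at hk
              linear_combination hk
            have := mul_right_cancel₀ Complex.I_ne_zero hI
            exact_mod_cast this
          -- irrationality contradiction
          rw [show θp = θm + 2 * Real.pi * α by linarith [hangle]] at hreal
          have hpi := Real.pi_ne_zero
          have h5 : (2 * (n:ℝ) * α - kk) * (2 * Real.pi) = 0 := by
            linear_combination hreal
          have h6 : 2 * (n:ℝ) * α - kk = 0 := by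
            rcases mul_eq_zero.mp h5 with h6 | h6
            · exact h6
            · exact absurd h6 (by positivity)
          have hn' : (n : ℝ) ≠ 0 := by
            simp only [ne_eq, Nat.cast_eq_zero]
            omega
          have hα' : (α : ℝ) = (kk : ℝ) / (2 * n) := by
            field_simp
            linarith [h6]
          apply hirr
          exact ⟨(kk : ℚ) / (2 * n), by push_cast [hα']; ring⟩
      have hwzero : w = 0 := by
        have := hp1
        rw [hzzero] at this
        simpa using this
      intro j k hjk
      have hk : k = n - j := by omega
      subst hk
      rw [hzw' j (by omega), hzzero, hwzero]
      ring
  -- diagonal values of all iterated derivatives vanish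
  have hdiag : ∀ (m : ℕ) (y : ℝ × ℝ), iteratedFDeriv ℝ m u x₀ (fun _ => y) = 0 := by
    intro m y
    rw [iteratedFDeriv_eq_pds hΩ m u hu_an x₀ hx₀, List.ofFn_const]
    have hbin : pds (List.replicate m ((y.1, y.2) : ℝ × ℝ)) u x₀
        = ∑ j ∈ range (m + 1), (m.choose j : ℂ) * (y.1 : ℂ) ^ j *
            (y.2 : ℂ) ^ (m - j) * ccf u x₀ j (m - j) :=
      bin hΩ hu_an m y.1 y.2 x₀ hx₀
    rw [show ((y.1, y.2) : ℝ × ℝ) = y from rfl] at hbin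
    rw [hbin]
    refine Finset.sum_eq_zero fun j hj => ?_
    rw [hccz (j + (m - j)) j (m - j) rfl, mul_zero]
  -- sum the power series: u vanishes near x₀
  obtain ⟨p, hp⟩ := hu_an x₀ hx₀
  obtain ⟨r, hpb⟩ := hp
  have hloc : ∀ᶠ z in 𝓝 x₀, u z = 0 := by
    have hball : ∀ y : ℝ × ℝ, y ∈ EMetric.ball (0 : ℝ × ℝ) r → u (x₀ + y) = 0 := by
      intro y hy
      have hs := hpb.hasSum_iteratedFDeriv hy
      simp only [hdiag, smul_zero] at hs
      exact (hs.unique hasSum_zero)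
    filter_upwards [EMetric.ball_mem_nhds x₀ hpb.r_pos] with zz hzz
    have hmem : zz - x₀ ∈ Metric.eball (0 : ℝ × ℝ) r := by
      rw [Metric.mem_eball, show (0 : ℝ × ℝ) = x₀ - x₀ by simp, edist_sub_right]
      exact hzz
    have := hball (zz - x₀) hmem
    simpa using this
  intro k
  have hfinal : iteratedFDeriv ℝ k u x₀ = iteratedFDeriv ℝ k (fun _ => (0:ℂ)) x₀ := by
    rw [← iteratedFDerivWithin_univ, ← iteratedFDerivWithin_univ]
    apply Filter.EventuallyEq.iteratedFDerivWithin_eq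
    · rw [nhdsWithin_univ]
      exact hloc
    · exact hloc.self_of_nhds
  rw [hfinal, iteratedFDeriv_zero_fun]
  rfl
end

section
/- Let Ω, λ, u, α, θ₀, h, Γ_h^−, Γ_h^+ be as in the context, and let n ≥ 3 be an integer. Suppose Γ_h^− and Γ_h^+ are nodal lines of u, i.e., u(x) = 0 for all x ∈ Γ_h^− ∪ Γ_h^+. If α ≠ q/p for all integers p, q with 1 ≤ p ≤ n−1 and 1 ≤ q ≤ p−1, then u vanishes at 0 up to order n, i.e., every partial derivative of u of order strictly less than n vanishes at 0. -/
open scoped ENNReal NNReal Topology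
open Filter Finset

namespace Stmt4Aux

abbrev E2 : Type := ℝ × ℝ

/-- derivSeries coefficient vanishes when the next coefficient of the series vanishes. -/
theorem derivSeries_coeff_zero {F : Type*} [NormedAddCommGroup F] [NormedSpace ℝ F]
    (q : FormalMultilinearSeries ℝ E2 F) (k : ℕ) (h : q (1 + k) = 0) :
    q.derivSeries k = 0 := by
  have h2 : q.changeOriginSeries 1 k = 0 := by
    rw [FormalMultilinearSeries.changeOriginSeries]
    apply Finset.sum_eq_zero
    intro s _
    rw [FormalMultilinearSeries.changeOriginSeriesTerm]
    rw [h]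
    apply LinearIsometryEquiv.map_zero
  rw [FormalMultilinearSeries.derivSeries]
  show (continuousMultilinearCurryFin1 ℝ E2 F : (E2 [×1]→L[ℝ] F) →L[ℝ] E2 →L[ℝ] F).compContinuousMultilinearMap (q.changeOriginSeries 1 k) = 0
  rw [h2]
  refine ContinuousMultilinearMap.ext fun v => ?_
  simp [ContinuousLinearMap.compContinuousMultilinearMap_coe]

/-- series for directional derivative. -/
theorem pd_series {w : E2 → ℂ} {q : FormalMultilinearSeries ℝ E2 ℂ} {r : ℝ≥0∞}
    (hw : HasFPowerSeriesOnBall w q 0 r) (e : E2) :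
    HasFPowerSeriesOnBall (fun x => fderiv ℝ w x e)
      ((ContinuousLinearMap.apply ℝ ℂ e).compFormalMultilinearSeries q.derivSeries) 0 r :=
  (ContinuousLinearMap.apply ℝ ℂ e).comp_hasFPowerSeriesOnBall hw.fderiv

noncomputable def sliceSeries (q : FormalMultilinearSeries ℝ E2 ℂ) (y : E2) :
    FormalMultilinearSeries ℝ ℝ ℂ :=
  fun k => ContinuousMultilinearMap.mkPiRing ℝ (Fin k) (q k (fun _ => y))

theorem slice {f : E2 → ℂ} {q : FormalMultilinearSeries ℝ E2 ℂ} {r : ℝ≥0∞}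
    (hf : HasFPowerSeriesOnBall f q 0 r) (y : E2) (hy : ‖y‖ ≤ 1) (ρ : ℝ≥0)
    (hρ0 : 0 < ρ) (hρ : (ρ : ℝ≥0∞) < r) :
    HasFPowerSeriesOnBall (fun t : ℝ => f (t • y)) (sliceSeries q y) 0 ρ := by
  have hyn : ‖y‖₊ ≤ 1 := by
    rw [← NNReal.coe_le_coe]
    exact_mod_cast hy
  constructor
  · apply FormalMultilinearSeries.le_radius_of_summable
    have hs : Summable fun k => ‖q k‖ * (ρ:ℝ)^k := q.summable_norm_mul_pow (hρ.trans_le hf.r_le)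
    refine Summable.of_nonneg_of_le (fun k => by positivity) (fun k => ?_) hs
    have h1 : ‖sliceSeries q y k‖ = ‖q k (fun _ => y)‖ := by
      simp [sliceSeries, ContinuousMultilinearMap.norm_mkPiRing]
    have h2 : ‖q k (fun _ => y)‖ ≤ ‖q k‖ := by
      calc ‖q k (fun _ => y)‖ ≤ ‖q k‖ * ∏ _i : Fin k, ‖y‖ := (q k).le_opNorm _
      _ ≤ ‖q k‖ * 1 := by
          have : ∏ _i : Fin k, ‖y‖ ≤ 1 := by
            rw [Finset.prod_const]
            exact pow_le_one₀ (norm_nonneg _) hy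
          exact mul_le_mul_of_nonneg_left this (norm_nonneg _)
      _ = ‖q k‖ := mul_one _
    rw [h1]
    have hρk : (0:ℝ) ≤ (ρ:ℝ)^k := by positivity
    exact mul_le_mul_of_nonneg_right h2 hρk
  · exact_mod_cast hρ0
  · intro t ht
    rw [EMetric.mem_ball, edist_zero_right] at ht
    have hty : t • y ∈ Metric.eball (0 : E2) r := by
      rw [EMetric.mem_ball, edist_zero_right]
      have h3 : ‖t • y‖₊ ≤ ‖t‖₊ := by
        refine (nnnorm_smul_le t y).trans ?_
        calc ‖t‖₊ * ‖y‖₊ ≤ ‖t‖₊ * 1 := mul_le_mul_of_nonneg_left hyn zero_le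
        _ = ‖t‖₊ := mul_one _
      exact lt_of_le_of_lt (by rw [enorm_eq_nnnorm, enorm_eq_nnnorm]; exact_mod_cast h3) (lt_trans ht hρ)
    have hsum := hf.hasSum hty
    rw [zero_add] at hsum
    have hfun : (fun k => sliceSeries q y k (fun _ => t)) = fun k => q k (fun _ => t • y) := by
      funext k
      rw [sliceSeries, ContinuousMultilinearMap.mkPiRing_apply,
        (q k).map_smul_univ (fun _ : Fin k => t) (fun _ => y)]
    simpa only [zero_add, hfun] using hsum

/-- extract diagonal coefficient vanishing from local vanishing of the function. -/
theorem slice_zero {f : E2 → ℂ} {q : FormalMultilinearSeries ℝ E2 ℂ} {r : ℝ≥0∞}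
    (hf : HasFPowerSeriesOnBall f q 0 r) (y : E2) (hy : ‖y‖ ≤ 1) (ρ : ℝ≥0)
    (hρ0 : 0 < ρ) (hρ : (ρ : ℝ≥0∞) < r)
    (h0 : (fun t : ℝ => f (t • y)) =ᶠ[𝓝 (0:ℝ)] 0) (k : ℕ) :
    q k (fun _ => y) = 0 := by
  have h1 := (slice hf y hy ρ hρ0 hρ).hasFPowerSeriesAt.eq_zero_of_eventually h0
  have h2 := congrFun h1 k
  have h3 := congrArg (fun L : ContinuousMultilinearMap ℝ (fun _ : Fin k => ℝ) ℂ =>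
    L (fun _ => (1:ℝ))) h2
  simpa [sliceSeries, ContinuousMultilinearMap.mkPiRing_apply] using h3


/-- truncation of a series -/
noncomputable def trunc (q : FormalMultilinearSeries ℝ E2 ℂ) (N : ℕ) :
    FormalMultilinearSeries ℝ E2 ℂ :=
  fun k => if k < N then 0 else q k

theorem trunc_radius (q : FormalMultilinearSeries ℝ E2 ℂ) (N : ℕ) :
    q.radius ≤ (trunc q N).radius := by
  apply ENNReal.le_of_forall_pos_nnreal_lt
  intro ρ _ hρ
  apply FormalMultilinearSeries.le_radius_of_summable
  refine Summable.of_nonneg_of_le (fun k => by positivity) (fun k => ?_)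
    (q.summable_norm_mul_pow hρ)
  have : ‖trunc q N k‖ ≤ ‖q k‖ := by
    rw [trunc]
    split
    · simp
    · exact le_rfl
  exact mul_le_mul_of_nonneg_right this (by positivity)

theorem trunc_hasSeries {u : E2 → ℂ} {q : FormalMultilinearSeries ℝ E2 ℂ} {r : ℝ≥0∞}
    (hf : HasFPowerSeriesOnBall u q 0 r) (N : ℕ)
    (hz : ∀ j < N, ∀ y : E2, q j (fun _ => y) = 0) :
    HasFPowerSeriesOnBall u (trunc q N) 0 r := by
  refine ⟨hf.r_le.trans (trunc_radius q N), hf.r_pos, ?_⟩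
  intro z hzb
  have hsum := hf.hasSum hzb
  have hfun : (fun k => trunc q N k (fun _ => z)) = fun k => q k (fun _ => z) := by
    funext k
    rw [trunc]
    split
    · rename_i hkN
      rw [hz k hkN]
      simp
    · rfl
  rw [hfun]
  exact hsum

/-- series for `u - (m-th homogeneous part)`. -/
theorem sub_homog_hasSeries {u : E2 → ℂ} {q : FormalMultilinearSeries ℝ E2 ℂ} {r : ℝ≥0∞}
    (hf : HasFPowerSeriesOnBall u q 0 r) (M : ℕ)
    (hz : ∀ j < M, ∀ y : E2, q j (fun _ => y) = 0) :
    HasFPowerSeriesOnBall (fun z => u z - q M (fun _ => z)) (trunc q (M + 1)) 0 r := by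
  refine ⟨hf.r_le.trans (trunc_radius q (M+1)), hf.r_pos, ?_⟩
  intro z hzb
  simp only [zero_add]
  have hsum := (hf.hasSum hzb).update M 0
  simp only [zero_add] at hsum
  have hfun : Function.update (fun k => q k (fun _ => z)) M 0
      = fun k => trunc q (M+1) k (fun _ => z) := by
    funext k
    rcases eq_or_ne k M with rfl | hkM
    · simp [trunc]
    · rw [Function.update_of_ne hkM, trunc]
      split
      · rename_i hkN
        rw [hz k (by omega)]
        simp
      · rfl
  rw [hfun] at hsum
  have hv : (0 - (q M) fun _ => z) + u z = u z - q M (fun _ => z) := by ring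
  rwa [hv] at hsum

/-- series of the m-th homogeneous part alone. -/
noncomputable def homogSeries (q : FormalMultilinearSeries ℝ E2 ℂ) (M : ℕ) :
    FormalMultilinearSeries ℝ E2 ℂ :=
  Function.update (0 : FormalMultilinearSeries ℝ E2 ℂ) M (q M)

theorem homogSeries_same (q : FormalMultilinearSeries ℝ E2 ℂ) (M : ℕ) :
    homogSeries q M M = q M := Function.update_self _ _ _

theorem homogSeries_ne (q : FormalMultilinearSeries ℝ E2 ℂ) (M : ℕ) {k : ℕ} (hk : k ≠ M) :
    homogSeries q M k = 0 := Function.update_of_ne hk _ _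

theorem homog_hasSeries (q : FormalMultilinearSeries ℝ E2 ℂ) (M : ℕ) :
    HasFPowerSeriesOnBall (fun z => q M (fun _ => z)) (homogSeries q M) 0 ⊤ := by
  constructor
  · rw [top_le_iff]
    by_contra hne
    obtain ⟨ρ, hρ1, hρ2⟩ := ENNReal.lt_iff_exists_nnreal_btwn.1 (Ne.lt_top hne)
    have : (ρ : ℝ≥0∞) ≤ (homogSeries q M).radius := by
      apply FormalMultilinearSeries.le_radius_of_summable
      apply summable_of_ne_finset_zero (s := {M})
      intro k hk
      simp at hk
      rw [homogSeries_ne q M hk]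
      simp
    exact absurd (lt_of_le_of_lt this hρ1) (lt_irrefl _)
  · exact ENNReal.zero_lt_top
  · intro z _
    simp only [zero_add]
    have h1 : ∀ k, k ≠ M → homogSeries q M k (fun _ => z) = 0 := by
      intro k hk
      rw [homogSeries_ne q M hk]
      simp
    have := hasSum_single (f := fun k => homogSeries q M k (fun _ => z)) M h1
    simp only [homogSeries_same] at this
    exact this

/-- a power series with vanishing low coefficients has vanishing iterated derivatives. -/
theorem iterzero (k : ℕ) : ∀ {F : Type} [NormedAddCommGroup F] [NormedSpace ℝ F]
    [CompleteSpace F] {f : E2 → F} {q : FormalMultilinearSeries ℝ E2 F} {r : ℝ≥0∞},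
    HasFPowerSeriesOnBall f q 0 r → (∀ j ≤ k, q j = 0) →
    iteratedFDeriv ℝ k f 0 = 0 := by
  induction k with
  | zero =>
    intro F _ _ _ f q r hq hz
    refine ContinuousMultilinearMap.ext fun v => ?_
    rw [iteratedFDeriv_zero_apply]
    have h0 : f 0 = q 0 (fun _ => 0) := (hq.coeff_zero _).symm
    rw [h0, hz 0 (le_refl 0)]
    simp
  | succ k IH =>
    intro F _ _ _ f q r hq hz
    have h2 := IH hq.fderiv (fun j hj =>
      derivSeries_coeff_zero q j (by rw [Nat.add_comm]; exact hz (j+1) (by omega)))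
    refine ContinuousMultilinearMap.ext fun v => ?_
    rw [iteratedFDeriv_succ_apply_right, h2]
    simp


noncomputable def L1 : E2 →L[ℝ] ℂ := Complex.ofRealCLM.comp (ContinuousLinearMap.fst ℝ ℝ ℝ)
noncomputable def L2 : E2 →L[ℝ] ℂ := Complex.ofRealCLM.comp (ContinuousLinearMap.snd ℝ ℝ ℝ)

noncomputable def Dmono (a b : ℕ) (w : E2) : E2 →L[ℝ] ℂ :=
  (w.1:ℂ)^a • (((ContinuousLinearMap.smulRight (1 : ℂ →L[ℂ] ℂ)
      ((b:ℂ) * (w.2:ℂ)^(b-1))).restrictScalars ℝ).comp L2)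
  + (w.2:ℂ)^b • (((ContinuousLinearMap.smulRight (1 : ℂ →L[ℂ] ℂ)
      ((a:ℂ) * (w.1:ℂ)^(a-1))).restrictScalars ℝ).comp L1)

theorem Dmono_hasFDerivAt (a b : ℕ) (w : E2) :
    HasFDerivAt (fun v : E2 => (v.1:ℂ)^a * (v.2:ℂ)^b) (Dmono a b w) w := by
  have h1 : HasFDerivAt (fun v : E2 => ((v.1 : ℝ) : ℂ)) L1 w := L1.hasFDerivAt
  have h2 : HasFDerivAt (fun v : E2 => ((v.2 : ℝ) : ℂ)) L2 w := L2.hasFDerivAt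
  have hp1 : HasFDerivAt (fun z : ℂ => z ^ a) (ContinuousLinearMap.smulRight
      (1 : ℂ →L[ℂ] ℂ) ((a:ℂ) * (w.1:ℂ)^(a-1))) ((w.1:ℂ)) := (hasDerivAt_pow a _).hasFDerivAt
  have hp2 : HasFDerivAt (fun z : ℂ => z ^ b) (ContinuousLinearMap.smulRight
      (1 : ℂ →L[ℂ] ℂ) ((b:ℂ) * (w.2:ℂ)^(b-1))) ((w.2:ℂ)) := (hasDerivAt_pow b _).hasFDerivAt
  have hc1 : HasFDerivAt (fun v : E2 => (v.1:ℂ)^a)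
      (((ContinuousLinearMap.smulRight (1 : ℂ →L[ℂ] ℂ)
        ((a:ℂ) * (w.1:ℂ)^(a-1))).restrictScalars ℝ).comp L1) w :=
    (hp1.restrictScalars ℝ).comp w h1
  have hc2 : HasFDerivAt (fun v : E2 => (v.2:ℂ)^b)
      (((ContinuousLinearMap.smulRight (1 : ℂ →L[ℂ] ℂ)
        ((b:ℂ) * (w.2:ℂ)^(b-1))).restrictScalars ℝ).comp L2) w :=
    (hp2.restrictScalars ℝ).comp w h2
  exact hc1.mul hc2

theorem Dmono_apply1 (a b : ℕ) (w : E2) :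
    Dmono a b w ((1:ℝ),(0:ℝ)) = (a:ℂ) * ((w.1:ℂ)^(a-1) * (w.2:ℂ)^b) := by
  simp [Dmono, L1, L2, ContinuousLinearMap.smulRight_apply]
  ring

theorem Dmono_apply2 (a b : ℕ) (w : E2) :
    Dmono a b w ((0:ℝ),(1:ℝ)) = (b:ℂ) * ((w.1:ℂ)^a * (w.2:ℂ)^(b-1)) := by
  simp [Dmono, L1, L2, ContinuousLinearMap.smulRight_apply]
  ring

theorem poly_hasFDerivAt (N : ℕ) (d : ℕ → ℂ) (a b : ℕ → ℕ) (w : E2) :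
    HasFDerivAt (fun v : E2 => ∑ j ∈ Finset.range N, d j * ((v.1:ℂ)^(a j) * (v.2:ℂ)^(b j)))
      (∑ j ∈ Finset.range N, d j • Dmono (a j) (b j) w) w := by
  apply HasFDerivAt.fun_sum
  intro j _
  exact (Dmono_hasFDerivAt (a j) (b j) w).const_mul (d j)

theorem pd1_poly (N : ℕ) (d : ℕ → ℂ) (a b : ℕ → ℕ) :
    pd1 (fun v : E2 => ∑ j ∈ Finset.range N, d j * ((v.1:ℂ)^(a j) * (v.2:ℂ)^(b j)))
      = fun w : E2 => ∑ j ∈ Finset.range N,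
          (d j * (a j : ℂ)) * ((w.1:ℂ)^(a j - 1) * (w.2:ℂ)^(b j)) := by
  funext w
  unfold pd1
  rw [(poly_hasFDerivAt N d a b w).fderiv]
  rw [ContinuousLinearMap.sum_apply]
  refine Finset.sum_congr rfl fun j _ => ?_
  rw [ContinuousLinearMap.smul_apply]
  show d j • Dmono (a j) (b j) w ((1:ℝ),(0:ℝ)) = _
  rw [Dmono_apply1]
  rw [smul_eq_mul]
  ring

theorem pd2_poly (N : ℕ) (d : ℕ → ℂ) (a b : ℕ → ℕ) :
    pd2 (fun v : E2 => ∑ j ∈ Finset.range N, d j * ((v.1:ℂ)^(a j) * (v.2:ℂ)^(b j)))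
      = fun w : E2 => ∑ j ∈ Finset.range N,
          (d j * (b j : ℂ)) * ((w.1:ℂ)^(a j) * (w.2:ℂ)^(b j - 1)) := by
  funext w
  unfold pd2
  rw [(poly_hasFDerivAt N d a b w).fderiv]
  rw [ContinuousLinearMap.sum_apply]
  refine Finset.sum_congr rfl fun j _ => ?_
  rw [ContinuousLinearMap.smul_apply]
  show d j • Dmono (a j) (b j) w ((0:ℝ),(1:ℝ)) = _
  rw [Dmono_apply2]
  rw [smul_eq_mul]
  ring

theorem pdpd_add (w₁ w₂ : E2 → ℂ) (B : Set E2) (hB : IsOpen B)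
    (h1 : AnalyticOnNhd ℝ w₁ B) (h2 : AnalyticOnNhd ℝ w₂ B) (e f : E2) {x : E2} (hx : x ∈ B) :
    fderiv ℝ (fun z => fderiv ℝ (fun y => w₁ y + w₂ y) z e) x f
      = fderiv ℝ (fun z => fderiv ℝ w₁ z e) x f + fderiv ℝ (fun z => fderiv ℝ w₂ z e) x f := by
  have hfd : ∀ z ∈ B, fderiv ℝ (fun y => w₁ y + w₂ y) z e
      = fderiv ℝ w₁ z e + fderiv ℝ w₂ z e := by
    intro z hz
    rw [fderiv_fun_add (h1 z hz).differentiableAt (h2 z hz).differentiableAt]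
    rfl
  have hev : (fun z => fderiv ℝ (fun y => w₁ y + w₂ y) z e)
      =ᶠ[𝓝 x] fun z => fderiv ℝ w₁ z e + fderiv ℝ w₂ z e := by
    filter_upwards [hB.mem_nhds hx] with z hz using hfd z hz
  rw [hev.fderiv_eq]
  have hd1 : DifferentiableAt ℝ (fun z => fderiv ℝ w₁ z e) x := by
    have := (ContinuousLinearMap.apply ℝ ℂ e).comp_analyticOnNhd (h1.fderiv)
    exact (this x hx).differentiableAt
  have hd2 : DifferentiableAt ℝ (fun z => fderiv ℝ w₂ z e) x := by
    have := (ContinuousLinearMap.apply ℝ ℂ e).comp_analyticOnNhd (h2.fderiv)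
    exact (this x hx).differentiableAt
  rw [fderiv_fun_add hd1 hd2]
  rfl


/-- one-variable coefficient extraction -/
theorem ext1 {N : ℕ} {f : ℕ → ℂ} (hf : ∀ t : ℝ, ∑ j ∈ Finset.range N, f j * (t:ℂ)^j = 0) :
    ∀ j, j < N → f j = 0 := by
  set P : Polynomial ℂ := ∑ j ∈ Finset.range N, Polynomial.C (f j) * Polynomial.X ^ j with hP
  have hroot : ∀ t : ℝ, P.IsRoot (t:ℂ) := by
    intro t
    rw [Polynomial.IsRoot, hP, Polynomial.eval_finset_sum]
    simpa using hf t
  have hinf : {x : ℂ | P.IsRoot x}.Infinite :=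
    Set.infinite_of_injective_forall_mem (f := fun t : ℝ => (t:ℂ))
      Complex.ofReal_injective hroot
  have hP0 : P = 0 := P.eq_zero_of_infinite_isRoot hinf
  intro j hj
  have hcoeff : P.coeff j = f j := by
    rw [hP, Polynomial.finset_sum_coeff]
    rw [Finset.sum_eq_single j]
    · simp
    · intro i _ hij
      simp only [Polynomial.coeff_C_mul, Polynomial.coeff_X_pow]
      rw [if_neg (fun h => hij h.symm)]
      simp
    · intro hjj
      exact absurd (Finset.mem_range.2 hj) hjj
  rw [← hcoeff, hP0]
  simp

theorem I_pow_im (p : ℕ) :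
    (Complex.I ^ p).im = if Odd p then (-1:ℝ)^(p/2) else 0 := by
  rcases Nat.even_or_odd p with ⟨q, rfl⟩ | ⟨q, rfl⟩
  · have h1 : q + q = 2 * q := by ring
    have hne : ¬ Odd (q + q) := by rw [Nat.odd_iff]; omega
    rw [if_neg hne, h1, pow_mul, Complex.I_sq]
    have h2 : ((-1:ℂ))^q = (((-1:ℝ)^q : ℝ) : ℂ) := by push_cast; ring
    rw [h2]
    exact Complex.ofReal_im _
  · have h1 : Complex.I ^ (2*q+1) = ((((-1:ℝ))^q : ℝ) : ℂ) * Complex.I := by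
      rw [pow_succ, pow_mul, Complex.I_sq]
      push_cast
      ring
    have h2 : Odd (2*q+1) := ⟨q, by ring⟩
    have h3 : (2*q+1)/2 = q := by omega
    rw [h1, if_pos h2, h3, Complex.mul_im, Complex.ofReal_re, Complex.ofReal_im,
      Complex.I_re, Complex.I_im]
    ring

/-- de Moivre-type expansion of sin (M θ). -/
theorem trig (θ : ℝ) (M : ℕ) :
    Real.sin (M * θ) = ∑ j ∈ Finset.range (M+1),
      (Real.cos θ)^j * (Real.sin θ)^(M-j) * (Nat.choose M j) *
        (if Odd (M - j) then (-1:ℝ)^((M - j)/2) else 0) := by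
  have h := Complex.cos_add_sin_mul_I_pow M (θ:ℂ)
  rw [add_pow] at h
  have him := congrArg Complex.im h
  rw [Complex.im_sum] at him
  have hR : (Complex.cos (↑M * ↑θ) + Complex.sin (↑M * ↑θ) * Complex.I).im
      = Real.sin (M * θ) := by
    have hc : ((M:ℂ) * (θ:ℂ)) = ((M * θ : ℝ) : ℂ) := by push_cast; ring
    rw [hc, ← Complex.ofReal_cos, ← Complex.ofReal_sin, Complex.add_im, Complex.ofReal_im,
      Complex.mul_im, Complex.ofReal_re, Complex.ofReal_im, Complex.I_im, Complex.I_re]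
    ring
  have hL : ∀ j ∈ Finset.range (M+1),
      (Complex.cos ↑θ ^ j * (Complex.sin ↑θ * Complex.I) ^ (M - j) * (M.choose j : ℂ)).im
      = (Real.cos θ)^j * (Real.sin θ)^(M-j) * (Nat.choose M j) *
        (if Odd (M - j) then (-1:ℝ)^((M - j)/2) else 0) := by
    intro j _
    have hab : Complex.cos ↑θ ^ j * (Complex.sin ↑θ * Complex.I) ^ (M - j) * (M.choose j : ℂ)
        = (((Real.cos θ)^j * (Real.sin θ)^(M-j) * (M.choose j) : ℝ) : ℂ)
          * Complex.I ^ (M-j) := by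
      rw [mul_pow, ← Complex.ofReal_cos, ← Complex.ofReal_sin]
      push_cast
      ring
    rw [hab, Complex.mul_im, I_pow_im, Complex.ofReal_re, Complex.ofReal_im]
    split_ifs <;> ring
  calc Real.sin (M * θ) = (Complex.cos (↑M * ↑θ) + Complex.sin (↑M * ↑θ) * Complex.I).im := hR.symm
    _ = ∑ j ∈ Finset.range (M+1),
        (Complex.cos ↑θ ^ j * (Complex.sin ↑θ * Complex.I) ^ (M - j) * (M.choose j : ℂ)).im :=
        him.symm
    _ = _ := Finset.sum_congr rfl hL

/-- expansion of the diagonal of a continuous multilinear map as a polynomial. -/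
theorem diag_expansion (m : ℕ) (G : ContinuousMultilinearMap ℝ (fun _ : Fin m => E2) ℂ) (y : E2) :
    G (fun _ => y) = ∑ j ∈ Finset.range (m+1),
      (∑ s ∈ Finset.powersetCard (m - j) (Finset.univ : Finset (Fin m)),
          G (fun i => if i ∈ s then ((1:ℝ),(0:ℝ)) else ((0:ℝ),(1:ℝ))))
        * (y.1:ℂ)^(m-j) * (y.2:ℂ)^j := by
  classical
  have hy : (fun _ : Fin m => y)
      = (fun _ : Fin m => y.1 • (((1:ℝ),(0:ℝ)) : E2)) + (fun _ => y.2 • (((0:ℝ),(1:ℝ)) : E2)) := by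
    funext i
    simp [Prod.ext_iff]
  have hterm : ∀ s : Finset (Fin m),
      G.toMultilinearMap (s.piecewise (fun _ : Fin m => y.1 • (((1:ℝ),(0:ℝ)) : E2))
        (fun _ => y.2 • (((0:ℝ),(1:ℝ)) : E2)))
      = ((y.1 ^ s.card * y.2 ^ (m - s.card) : ℝ) : ℂ) *
          G (fun i => if i ∈ s then ((1:ℝ),(0:ℝ)) else ((0:ℝ),(1:ℝ))) := by
    intro s
    have hpw : (s.piecewise (fun _ : Fin m => y.1 • (((1:ℝ),(0:ℝ)) : E2))
        (fun _ => y.2 • (((0:ℝ),(1:ℝ)) : E2)))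
        = fun i => (if i ∈ s then y.1 else y.2) •
            (if i ∈ s then (((1:ℝ),(0:ℝ)) : E2) else ((0:ℝ),(1:ℝ))) := by
      funext i
      by_cases hi : i ∈ s <;> simp [Finset.piecewise, hi]
    rw [hpw, G.toMultilinearMap.map_smul_univ]
    have h1 : Finset.filter (· ∈ s) Finset.univ = s := by
      ext i; simp
    have h2 : (Finset.filter (fun i => ¬ i ∈ s) Finset.univ).card = m - s.card := by
      have h3 := Finset.card_filter_add_card_filter_not
        (s := (Finset.univ : Finset (Fin m))) (p := (· ∈ s))
      simp only [Finset.card_univ, Fintype.card_fin] at h3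
      rw [h1] at h3
      omega
    have hprod : (∏ i : Fin m, if i ∈ s then y.1 else y.2)
        = y.1 ^ s.card * y.2 ^ (m - s.card) := by
      rw [← Finset.prod_filter_mul_prod_filter_not Finset.univ (· ∈ s)]
      have hA : (∏ i ∈ Finset.filter (· ∈ s) Finset.univ, if i ∈ s then y.1 else y.2)
          = y.1 ^ s.card := by
        calc (∏ i ∈ Finset.filter (· ∈ s) Finset.univ, if i ∈ s then y.1 else y.2)
            = ∏ _i ∈ Finset.filter (· ∈ s) Finset.univ, y.1 :=
              Finset.prod_congr rfl (fun i hi => if_pos ((Finset.mem_filter.1 hi).2))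
          _ = y.1 ^ s.card := by rw [Finset.prod_const, h1]
      have hB : (∏ i ∈ Finset.filter (fun i => ¬ i ∈ s) Finset.univ, if i ∈ s then y.1 else y.2)
          = y.2 ^ (m - s.card) := by
        calc (∏ i ∈ Finset.filter (fun i => ¬ i ∈ s) Finset.univ, if i ∈ s then y.1 else y.2)
            = ∏ _i ∈ Finset.filter (fun i => ¬ i ∈ s) Finset.univ, y.2 :=
              Finset.prod_congr rfl (fun i hi => if_neg ((Finset.mem_filter.1 hi).2))
          _ = y.2 ^ (m - s.card) := by rw [Finset.prod_const, h2]
      rw [hA, hB]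
    rw [hprod, Complex.real_smul]
    have hGG : G.toMultilinearMap (fun i => if i ∈ s then (((1:ℝ),(0:ℝ)) : E2) else ((0:ℝ),(1:ℝ)))
        = G (fun i => if i ∈ s then (((1:ℝ),(0:ℝ)) : E2) else ((0:ℝ),(1:ℝ))) := rfl
    rw [hGG]
  have hmain : G.toMultilinearMap (fun _ => y)
      = ∑ s : Finset (Fin m), ((y.1 ^ s.card * y.2 ^ (m - s.card) : ℝ) : ℂ) *
          G (fun i => if i ∈ s then ((1:ℝ),(0:ℝ)) else ((0:ℝ),(1:ℝ))) := by
    rw [hy, G.toMultilinearMap.map_add_univ]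
    exact Finset.sum_congr rfl (fun s _ => hterm s)
  have hstep2 : G.toMultilinearMap (fun _ => y)
      = ∑ j ∈ Finset.range (m+1), ((y.1 ^ j * y.2 ^ (m - j) : ℝ) : ℂ) *
          (∑ s ∈ Finset.powersetCard j (Finset.univ : Finset (Fin m)),
            G (fun i => if i ∈ s then ((1:ℝ),(0:ℝ)) else ((0:ℝ),(1:ℝ)))) := by
    rw [hmain]
    rw [← Finset.powerset_univ, Finset.sum_powerset]
    simp only [Finset.card_univ, Fintype.card_fin]
    refine Finset.sum_congr rfl (fun j _ => ?_)
    rw [Finset.mul_sum]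
    refine Finset.sum_congr rfl (fun st hst => ?_)
    rw [(Finset.mem_powersetCard.1 hst).2]
  have hfinal : G.toMultilinearMap (fun _ => y) = G (fun _ => y) := rfl
  rw [← hfinal, hstep2]
  rw [← Finset.sum_range_reflect]
  refine Finset.sum_congr rfl (fun j hj => ?_)
  have hjm : j ≤ m := by
    have := Finset.mem_range.1 hj
    omega
  have hidx : m + 1 - 1 - j = m - j := by omega
  have hidx2 : m - (m - j) = j := by omega
  rw [hidx, hidx2]
  push_cast
  ring


noncomputable def ΔSeries (q : FormalMultilinearSeries ℝ E2 ℂ) : FormalMultilinearSeries ℝ E2 ℂ :=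
  (ContinuousLinearMap.apply ℝ ℂ (((1:ℝ),(0:ℝ)) : E2)).compFormalMultilinearSeries
    (((ContinuousLinearMap.apply ℝ ℂ (((1:ℝ),(0:ℝ)) : E2)).compFormalMultilinearSeries
      q.derivSeries).derivSeries)
  + (ContinuousLinearMap.apply ℝ ℂ (((0:ℝ),(1:ℝ)) : E2)).compFormalMultilinearSeries
    (((ContinuousLinearMap.apply ℝ ℂ (((0:ℝ),(1:ℝ)) : E2)).compFormalMultilinearSeries
      q.derivSeries).derivSeries)

theorem compFMS_coeff_zero {F G : Type*} [NormedAddCommGroup F] [NormedSpace ℝ F]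
    [NormedAddCommGroup G] [NormedSpace ℝ G]
    (g : F →L[ℝ] G) (P : FormalMultilinearSeries ℝ E2 F) (k : ℕ) (h : P k = 0) :
    (g.compFormalMultilinearSeries P) k = 0 := by
  rw [ContinuousLinearMap.compFormalMultilinearSeries_apply, h]
  refine ContinuousMultilinearMap.ext fun v => ?_
  simp [ContinuousLinearMap.compContinuousMultilinearMap_coe]

theorem ΔSeries_hasSeries {w : E2 → ℂ} {q : FormalMultilinearSeries ℝ E2 ℂ} {r : ℝ≥0∞}
    (hw : HasFPowerSeriesOnBall w q 0 r) :
    HasFPowerSeriesOnBall (fun x => pd1 (pd1 w) x + pd2 (pd2 w) x) (ΔSeries q) 0 r := by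
  have h1 := pd_series (pd_series hw (((1:ℝ),(0:ℝ)) : E2)) (((1:ℝ),(0:ℝ)) : E2)
  have h2 := pd_series (pd_series hw (((0:ℝ),(1:ℝ)) : E2)) (((0:ℝ),(1:ℝ)) : E2)
  exact h1.add h2

theorem ΔSeries_coeff_zero (q : FormalMultilinearSeries ℝ E2 ℂ) (k : ℕ)
    (h : q (k + 2) = 0) : ΔSeries q k = 0 := by
  have hd1 : q.derivSeries (k+1) = 0 := derivSeries_coeff_zero q (k+1) (by
    rw [show 1 + (k+1) = k + 2 by omega]
    exact h)
  have step : ∀ e : E2, ((ContinuousLinearMap.apply ℝ ℂ e).compFormalMultilinearSeries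
      (((ContinuousLinearMap.apply ℝ ℂ e).compFormalMultilinearSeries
        q.derivSeries).derivSeries)) k = 0 := by
    intro e
    apply compFMS_coeff_zero
    apply derivSeries_coeff_zero
    rw [show 1 + k = k + 1 by omega]
    exact compFMS_coeff_zero _ _ _ hd1
  show (ContinuousLinearMap.apply ℝ ℂ (((1:ℝ),(0:ℝ)) : E2)).compFormalMultilinearSeries _ k
    + (ContinuousLinearMap.apply ℝ ℂ (((0:ℝ),(1:ℝ)) : E2)).compFormalMultilinearSeries _ k = 0
  rw [step (((1:ℝ),(0:ℝ)) : E2), step (((0:ℝ),(1:ℝ)) : E2)]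
  simp

/-- the only possibly-nonzero coefficient of `ΔSeries (homogSeries p m)` is at `m - 2`. -/
theorem ΔSeries_homog_coeff_zero (p : FormalMultilinearSeries ℝ E2 ℂ) (m : ℕ) (hm : 2 ≤ m)
    (k : ℕ) (hk : k ≠ m - 2) : ΔSeries (homogSeries p m) k = 0 := by
  apply ΔSeries_coeff_zero
  apply homogSeries_ne
  omega

/-- the Laplacian of the m-th homogeneous part, evaluated via its series. -/
theorem ΔQ_eq_coeff (p : FormalMultilinearSeries ℝ E2 ℂ) (m : ℕ) (hm : 2 ≤ m) (y : E2) :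
    pd1 (pd1 (fun z => p m (fun _ => z))) y + pd2 (pd2 (fun z => p m (fun _ => z))) y
      = ΔSeries (homogSeries p m) (m-2) (fun _ => y) := by
  have hser := ΔSeries_hasSeries (homog_hasSeries p m)
  have hy : y ∈ Metric.eball (0:E2) ⊤ := by simp [EMetric.mem_ball, edist_lt_top]
  have hsum := hser.hasSum hy
  rw [zero_add] at hsum
  have hsingle := hasSum_single (f := fun k => ΔSeries (homogSeries p m) k (fun _ => y)) (m-2)
    (fun k hk => by
      show (ΔSeries (homogSeries p m) k) (fun _ => y) = 0
      rw [ΔSeries_homog_coeff_zero p m hm k hk]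
      simp)
  exact (HasSum.unique hsum hsingle)

theorem ray_vanish {u : E2 → ℂ} {Ω : Set E2} (hu_an : AnalyticOnNhd ℝ u Ω) {h : ℝ} (hh : 0 < h)
    (hdisk : ∀ x : E2, x.1^2 + x.2^2 ≤ h^2 → x ∈ Ω)
    {p : FormalMultilinearSeries ℝ E2 ℂ} {δ : ℝ≥0} (hδ : 0 < δ)
    (hp : HasFPowerSeriesOnBall u p 0 (↑δ : ℝ≥0∞))
    (w : E2) (hw : w.1^2 + w.2^2 ≤ 1)
    (hvan : ∀ t : ℝ, 0 ≤ t → t ≤ h → u (t • w) = 0) :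
    ∀ k, p k (fun _ => w) = 0 := by
  have hw1 : |w.1| ≤ 1 := by nlinarith [sq_nonneg w.1, sq_nonneg w.2, abs_nonneg w.1, sq_abs w.1]
  have hw2 : |w.2| ≤ 1 := by nlinarith [sq_nonneg w.1, sq_nonneg w.2, abs_nonneg w.2, sq_abs w.2]
  have hwn : ‖w‖ ≤ 1 := by
    rw [Prod.norm_def]
    simp only [Real.norm_eq_abs]
    exact max_le hw1 hw2
  have hU : AnalyticOnNhd ℝ (fun t : ℝ => u (t • w)) (Set.Ioo (-h) h) := by
    intro t ht
    have hmem : (t • w) ∈ Ω := by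
      apply hdisk
      have ht1 : (t • w).1 = t * w.1 := rfl
      have ht2 : (t • w).2 = t * w.2 := rfl
      rw [ht1, ht2]
      have : t^2 ≤ h^2 := by nlinarith [ht.1, ht.2]
      nlinarith [sq_nonneg w.1, sq_nonneg w.2, sq_nonneg t]
    have hL : AnalyticAt ℝ (fun t : ℝ => t • w) t :=
      ((ContinuousLinearMap.id ℝ ℝ).smulRight w).analyticAt t
    exact AnalyticAt.comp (f := fun t : ℝ => t • w) (g := u) (hu_an _ hmem) hL
  have hEq : Set.EqOn (fun t : ℝ => u (t • w)) 0 (Set.Ioo (-h) h) := by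
    apply hU.eqOn_zero_of_preconnected_of_frequently_eq_zero isPreconnected_Ioo
      (show h/2 ∈ Set.Ioo (-h) h by constructor <;> linarith)
    have hev : ∀ᶠ t in 𝓝 (h/2), u (t • w) = 0 := by
      filter_upwards [Ioo_mem_nhds (show (0:ℝ) < h/2 by linarith) (show h/2 < h by linarith)]
        with t ht
      exact hvan t ht.1.le ht.2.le
    exact (hev.filter_mono nhdsWithin_le_nhds).frequently
  intro k
  apply slice_zero hp w hwn (δ/2) (by positivity)
    (by exact_mod_cast NNReal.half_lt_self hδ.ne')
  · have hIoo : Set.Ioo (-h) h ∈ 𝓝 (0:ℝ) := Ioo_mem_nhds (by linarith) hh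
    filter_upwards [hIoo] with t ht
    exact hEq ht

/-- harmonicity of the lowest homogeneous part. -/
theorem harmonic_rec {u : E2 → ℂ} {Ω : Set E2} (lam : ℝ)
    (hu_eq : ∀ x ∈ Ω, pd1 (pd1 u) x + pd2 (pd2 u) x + (lam : ℂ) * u x = 0)
    {p : FormalMultilinearSeries ℝ E2 ℂ} {δ : ℝ≥0} (hδ : 0 < δ)
    (hp : HasFPowerSeriesOnBall u p 0 (↑δ : ℝ≥0∞))
    (hBΩ : EMetric.ball (0:E2) (↑δ : ℝ≥0∞) ⊆ Ω)
    (m : ℕ) (hm2 : 2 ≤ m)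
    (hlow : ∀ j < m, ∀ y : E2, p j (fun _ => y) = 0) :
    ∀ y : E2, pd1 (pd1 (fun z => p m (fun _ => z))) y
      + pd2 (pd2 (fun z => p m (fun _ => z))) y = 0 := by
  set Q : E2 → ℂ := fun z => p m (fun _ => z) with hQdef
  set v : E2 → ℂ := fun z => u z - p m (fun _ => z) with hvdef
  have hQser := homog_hasSeries p m
  have hvser : HasFPowerSeriesOnBall v (trunc p (m+1)) 0 (↑δ : ℝ≥0∞) :=
    sub_homog_hasSeries hp m hlow
  have hδ' : (0 : ℝ≥0∞) < ↑δ := by exact_mod_cast hδ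
  have hΔQ := ΔSeries_hasSeries hQser
  have hΔv := ΔSeries_hasSeries hvser
  have hLu : HasFPowerSeriesOnBall (fun z => (lam:ℂ) * u z)
      (((lam:ℂ) • (ContinuousLinearMap.id ℝ ℂ)).compFormalMultilinearSeries p) 0 (↑δ : ℝ≥0∞) := by
    exact ((lam:ℂ) • (ContinuousLinearMap.id ℝ ℂ)).comp_hasFPowerSeriesOnBall hp
  have hG := (hΔQ.mono hδ' le_top).add (hΔv.add hLu)
  -- the represented function vanishes on the ball
  have hQan : AnalyticOnNhd ℝ Q (EMetric.ball (0:E2) (↑δ : ℝ≥0∞)) := fun z _ =>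
    hQser.analyticAt_of_mem (by simp [EMetric.mem_ball, edist_lt_top])
  have hvan : AnalyticOnNhd ℝ v (EMetric.ball (0:E2) (↑δ : ℝ≥0∞)) := hvser.analyticOnNhd
  have hzero : ∀ x ∈ Metric.eball (0:E2) (↑δ : ℝ≥0∞),
      ((fun x => pd1 (pd1 Q) x + pd2 (pd2 Q) x)
        + ((fun x => pd1 (pd1 v) x + pd2 (pd2 v) x) + fun z => (lam:ℂ) * u z)) x = 0 := by
    intro x hx
    have huQv : u = fun z => Q z + v z := by
      funext z
      simp [hQdef, hvdef]
    have hsplit1 : pd1 (pd1 u) x = pd1 (pd1 Q) x + pd1 (pd1 v) x := by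
      conv_lhs => rw [huQv]
      exact pdpd_add Q v _ EMetric.isOpen_ball hQan hvan _ _ hx
    have hsplit2 : pd2 (pd2 u) x = pd2 (pd2 Q) x + pd2 (pd2 v) x := by
      conv_lhs => rw [huQv]
      exact pdpd_add Q v _ EMetric.isOpen_ball hQan hvan _ _ hx
    have heq := hu_eq x (hBΩ hx)
    rw [hsplit1, hsplit2] at heq
    show pd1 (pd1 Q) x + pd2 (pd2 Q) x + ((pd1 (pd1 v) x + pd2 (pd2 v) x) + (lam:ℂ) * u x) = 0
    linear_combination heq
  -- slice comparison at coefficient m-2, for unit vectors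
  have hunit : ∀ y : E2, ‖y‖ ≤ 1 → ΔSeries (homogSeries p m) (m-2) (fun _ => y) = 0 := by
    intro y hy
    have hev : (fun t : ℝ => (((fun x => pd1 (pd1 Q) x + pd2 (pd2 Q) x)
        + ((fun x => pd1 (pd1 v) x + pd2 (pd2 v) x) + fun z => (lam:ℂ) * u z)) (t • y)))
        =ᶠ[𝓝 (0:ℝ)] 0 := by
      have hball : Metric.ball (0:ℝ) (δ:ℝ) ∈ 𝓝 (0:ℝ) := Metric.ball_mem_nhds _ (by exact_mod_cast hδ)
      filter_upwards [hball] with t ht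
      apply hzero
      rw [EMetric.mem_ball, edist_zero_right]
      rw [Metric.mem_ball, dist_zero_right] at ht
      have h1 : ‖t • y‖ ≤ ‖t‖ := by
        rw [norm_smul]
        calc ‖t‖ * ‖y‖ ≤ ‖t‖ * 1 := mul_le_mul_of_nonneg_left hy (norm_nonneg _)
        _ = ‖t‖ := mul_one _
      have h2 : ‖t • y‖₊ < δ := by
        rw [← NNReal.coe_lt_coe]
        calc (‖t • y‖₊ : ℝ) = ‖t • y‖ := rfl
        _ ≤ ‖t‖ := h1
        _ < δ := ht
      exact_mod_cast h2
    have hz := slice_zero hG y hy (δ/2) (by positivity)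
      (by exact_mod_cast NNReal.half_lt_self hδ.ne') hev (m-2)
    -- G (m-2) diag y = SQ (m-2) diag y + (0 + 0)
    have hSV : ΔSeries (trunc p (m+1)) (m-2) = 0 := by
      apply ΔSeries_coeff_zero
      rw [trunc]
      rw [if_pos (by omega)]
    have hSL : (((lam:ℂ) • (ContinuousLinearMap.id ℝ ℂ)).compFormalMultilinearSeries p) (m-2)
        (fun _ => y) = 0 := by
      rw [ContinuousLinearMap.compFormalMultilinearSeries_apply]
      have : p (m-2) (fun _ => y) = 0 := hlow (m-2) (by omega) y
      simp [ContinuousLinearMap.compContinuousMultilinearMap_coe, this]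
    have hexpand : (ΔSeries (homogSeries p m)
        + (ΔSeries (trunc p (m+1))
          + ((lam:ℂ) • (ContinuousLinearMap.id ℝ ℂ)).compFormalMultilinearSeries p)) (m-2)
        (fun _ => y)
        = ΔSeries (homogSeries p m) (m-2) (fun _ => y)
          + (ΔSeries (trunc p (m+1)) (m-2) (fun _ => y)
            + (((lam:ℂ) • (ContinuousLinearMap.id ℝ ℂ)).compFormalMultilinearSeries p) (m-2)
              (fun _ => y)) := rfl
    rw [hexpand, hSV, hSL] at hz
    simpa using hz
  -- extend to all y by homogeneity
  intro y
  rw [ΔQ_eq_coeff p m hm2 y]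
  by_cases hy1 : ‖y‖ ≤ 1
  · exact hunit y hy1
  · push_neg at hy1
    have hy0 : 0 < ‖y‖ := by linarith
    set c : ℝ := ‖y‖
    have hcy : y = c • (c⁻¹ • y) := by
      rw [smul_smul, mul_inv_cancel₀ (ne_of_gt hy0), one_smul]
    have hnorm : ‖c⁻¹ • y‖ ≤ 1 := by
      rw [norm_smul, norm_inv, Real.norm_eq_abs, abs_of_pos hy0]
      rw [inv_mul_cancel₀ (ne_of_gt hy0)]
    have := hunit (c⁻¹ • y) hnorm
    calc ΔSeries (homogSeries p m) (m-2) (fun _ => y)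
        = ΔSeries (homogSeries p m) (m-2) (fun _ => c • (c⁻¹ • y)) := by rw [← hcy]
      _ = (∏ _i : Fin (m-2), c) • ΔSeries (homogSeries p m) (m-2) (fun _ => c⁻¹ • y) :=
          (ΔSeries (homogSeries p m) (m-2)).map_smul_univ _ _
      _ = 0 := by rw [this, smul_zero]

theorem extract_rec (m : ℕ) (hm1 : 1 ≤ m) (c : ℕ → ℂ)
    (hharm : ∀ t : ℝ,
        (∑ j ∈ range (m+1), (c j * ((m-j:ℕ):ℂ) * ((m-j-1:ℕ):ℂ)) * (t:ℂ)^j)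
        + (∑ j ∈ range (m+1), (c j * ((j:ℕ):ℂ) * ((j-1:ℕ):ℂ)) * (t:ℂ)^(j-1-1)) = 0) :
    ∀ j, j + 2 ≤ m → ((m-j : ℕ):ℂ) * ((m-j-1 : ℕ):ℂ) * c j
        + ((j+2 : ℕ):ℂ) * ((j+1 : ℕ):ℂ) * c (j+2) = 0 := by
  obtain ⟨M, rfl⟩ : ∃ M, m = M + 1 := ⟨m-1, by omega⟩
  have key : ∀ t : ℝ, ∑ i ∈ range M,
      ((c i * ((M+1-i:ℕ):ℂ) * ((M+1-i-1:ℕ):ℂ)) + (c (i+2) * ((i+2:ℕ):ℂ) * ((i+1:ℕ):ℂ)))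
        * (t:ℂ)^i = 0 := by
    intro t
    have h5 := hharm t
    have hres : (∑ j ∈ range (M+1+1), (c j * ((j:ℕ):ℂ) * ((j-1:ℕ):ℂ)) * (t:ℂ)^(j-1-1))
        = ∑ i ∈ range M, (c (i+2) * ((i+2:ℕ):ℂ) * ((i+1:ℕ):ℂ)) * (t:ℂ)^i := by
      set g : ℕ → ℂ := fun j => (c j * ((j:ℕ):ℂ) * ((j-1:ℕ):ℂ)) * (t:ℂ)^(j-1-1) with hg
      have hg0 : g 0 = 0 := by simp [hg]
      have hg1 : g 1 = 0 := by simp [hg]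
      calc ∑ j ∈ range (M+1+1), g j
          = (∑ i ∈ range (M+1), g (i+1)) + g 0 := Finset.sum_range_succ' g (M+1)
        _ = ((∑ i ∈ range M, g (i+1+1)) + g (0+1)) + g 0 := by
            rw [Finset.sum_range_succ' (fun i => g (i+1)) M]
        _ = ∑ i ∈ range M, g (i+1+1) := by rw [hg0, hg1]; ring
        _ = ∑ i ∈ range M, (c (i+2) * ((i+2:ℕ):ℂ) * ((i+1:ℕ):ℂ)) * (t:ℂ)^i :=
            Finset.sum_congr rfl fun i _ => rfl
    have hfirst : (∑ j ∈ range (M+1+1), (c j * ((M+1-j:ℕ):ℂ) * ((M+1-j-1:ℕ):ℂ)) * (t:ℂ)^j)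
        = ∑ i ∈ range M, (c i * ((M+1-i:ℕ):ℂ) * ((M+1-i-1:ℕ):ℂ)) * (t:ℂ)^i := by
      symm
      apply Finset.sum_subset
      · intro x hx
        simp only [Finset.mem_range] at *
        omega
      · intro x hx hnx
        simp only [Finset.mem_range] at hx hnx
        have hcases : M+1-x-1 = 0 ∨ M+1-x = 0 := by omega
        rcases hcases with hcc|hcc <;> rw [hcc] <;> simp
    rw [hres, hfirst] at h5
    have h6 : ∑ i ∈ range M, ((c i * ((M+1-i:ℕ):ℂ) * ((M+1-i-1:ℕ):ℂ)) * (t:ℂ)^i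
        + (c (i+2) * ((i+2:ℕ):ℂ) * ((i+1:ℕ):ℂ)) * (t:ℂ)^i) = 0 := by
      rw [Finset.sum_add_distrib]
      exact h5
    calc ∑ i ∈ range M, ((c i * ((M+1-i:ℕ):ℂ) * ((M+1-i-1:ℕ):ℂ))
            + (c (i+2) * ((i+2:ℕ):ℂ) * ((i+1:ℕ):ℂ))) * (t:ℂ)^i
        = ∑ i ∈ range M, ((c i * ((M+1-i:ℕ):ℂ) * ((M+1-i-1:ℕ):ℂ)) * (t:ℂ)^i
            + (c (i+2) * ((i+2:ℕ):ℂ) * ((i+1:ℕ):ℂ)) * (t:ℂ)^i) :=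
          Finset.sum_congr rfl fun i _ => by ring
      _ = 0 := h6
  intro j hj
  have hj' : j < M := by omega
  have := ext1 key j hj'
  linear_combination this

theorem choose_id (m : ℕ) : ∀ j, j + 2 ≤ m →
    (Nat.choose m (j+2)) * ((j+2)*(j+1)) = (Nat.choose m j) * ((m-j)*(m-j-1)) := by
  intro j hj
  have c1 := Nat.choose_succ_right_eq m j
  have c2 := Nat.choose_succ_right_eq m (j+1)
  have hsub : m - (j+1) = m - j - 1 := by omega
  rw [hsub] at c2
  calc (Nat.choose m (j+2)) * ((j+2)*(j+1)) = ((Nat.choose m (j+2))*(j+2))*(j+1) := by ring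
    _ = ((Nat.choose m (j+1))*(m-j-1))*(j+1) := by rw [c2]
    _ = ((Nat.choose m (j+1))*(j+1))*(m-j-1) := by ring
    _ = ((Nat.choose m j)*(m-j))*(m-j-1) := by rw [c1]
    _ = (Nat.choose m j)*((m-j)*(m-j-1)) := by ring

theorem solve_coeffs (m : ℕ) (hm1 : 1 ≤ m) (c : ℕ → ℂ) (θ : ℝ)
    (hc0 : c 0 = 0)
    (hD : ∀ j, j + 2 ≤ m → ((m-j:ℕ):ℂ) * ((m-j-1:ℕ):ℂ) * c j
      + ((j+2:ℕ):ℂ) * ((j+1:ℕ):ℂ) * c (j+2) = 0)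
    (hQ0 : ∑ j ∈ range (m+1), c j * ((Real.cos θ : ℝ):ℂ)^(m-j) * ((Real.sin θ:ℝ):ℂ)^j = 0)
    (hsin : Real.sin (m * θ) ≠ 0) :
    ∀ j ≤ m, c j = 0 := by
  have heven : ∀ k, 2*k ≤ m → c (2*k) = 0 := by
    intro k
    induction k with
    | zero => intro _; simpa using hc0
    | succ k IHk =>
      intro hk
      have h1 := hD (2*k) (by omega)
      rw [IHk (by omega), mul_zero, zero_add] at h1
      have h2 : ((2*k+2:ℕ):ℂ) ≠ 0 := Nat.cast_ne_zero.2 (by omega)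
      have h3 : ((2*k+1:ℕ):ℂ) ≠ 0 := Nat.cast_ne_zero.2 (by omega)
      have h4 : c (2*k+2) = 0 := by
        simp only [mul_eq_zero] at h1
        rcases h1 with (h|h)|h
        · exact absurd h h2
        · exact absurd h h3
        · exact h
      rw [show 2*(k+1) = 2*k+2 by ring]
      exact h4
  have hodd : ∀ k, 2*k+1 ≤ m →
      (m:ℂ) * c (2*k+1) = (-1:ℂ)^k * ((Nat.choose m (2*k+1) : ℕ):ℂ) * c 1 := by
    intro k
    induction k with
    | zero =>
      intro _
      rw [Nat.choose_one_right]
      ring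
    | succ k IHk =>
      intro hk
      have hD' := hD (2*k+1) (by omega)
      have hIH := IHk (by omega)
      have hch := congrArg (fun x : ℕ => (x:ℂ)) (choose_id m (2*k+1) (by omega))
      push_cast at hch
      rw [show 2*(k+1)+1 = (2*k+1)+2 by ring]
      have hne : (((2*k+1)+2:ℕ):ℂ) * (((2*k+1)+1:ℕ):ℂ) ≠ 0 := by
        apply mul_ne_zero <;> (apply Nat.cast_ne_zero.2; omega)
      apply mul_left_cancel₀ hne
      push_cast
      push_cast at hD' hIH
      linear_combination ((m:ℕ):ℂ) * hD' - (((m-(2*k+1):ℕ)):ℂ) * (((m-(2*k+1)-1:ℕ)):ℂ) * hIH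
        + (-1:ℂ)^k * c 1 * hch
  have hc1 : c 1 = 0 := by
    have hmul : ∑ j ∈ range (m+1),
        (m:ℂ) * (c j * ((Real.cos θ:ℝ):ℂ)^(m-j) * ((Real.sin θ:ℝ):ℂ)^j) = 0 := by
      rw [← Finset.mul_sum, hQ0, mul_zero]
    have hrefl : ∑ j ∈ range (m+1),
        (m:ℂ) * (c (m-j) * ((Real.cos θ:ℝ):ℂ)^(m-(m-j)) * ((Real.sin θ:ℝ):ℂ)^(m-j)) = 0 := by
      have h7 := Finset.sum_range_reflect
        (fun j => (m:ℂ) * (c j * ((Real.cos θ:ℝ):ℂ)^(m-j) * ((Real.sin θ:ℝ):ℂ)^j)) (m+1)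
      rw [hmul] at h7
      exact h7
    have hterm : ∀ j ∈ range (m+1),
        (m:ℂ) * (c (m-j) * ((Real.cos θ:ℝ):ℂ)^(m-(m-j)) * ((Real.sin θ:ℝ):ℂ)^(m-j))
        = c 1 * ((((Real.cos θ)^j * (Real.sin θ)^(m-j) * (Nat.choose m j) *
            (if Odd (m - j) then (-1:ℝ)^((m-j)/2) else 0)) : ℝ) : ℂ) := by
      intro j hj
      have hjm : j ≤ m := by
        have := Finset.mem_range.1 hj
        omega
      have hmm : m - (m - j) = j := by omega
      rw [hmm]
      rcases Nat.even_or_odd (m - j) with ⟨k, hk⟩ | ⟨k, hk⟩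
      · have h2 : c (m - j) = 0 := by
          rw [hk, show k+k = 2*k by ring]
          exact heven k (by omega)
        have hne : ¬ Odd (m - j) := by rw [Nat.odd_iff]; omega
        rw [h2, if_neg hne]
        simp
      · have h2 := hodd k (by omega)
        have hsym : Nat.choose m (2*k+1) = Nat.choose m j := by
          rw [← hk, Nat.choose_symm hjm]
        rw [hk, if_pos ⟨k, by ring⟩]
        have hdiv : (2*k+1)/2 = k := by omega
        rw [hdiv, ← hsym]
        push_cast [-Complex.ofReal_cos, -Complex.ofReal_sin]
        push_cast at h2
        linear_combination ((Real.cos θ:ℝ):ℂ)^j * ((Real.sin θ:ℝ):ℂ)^(2*k+1) * h2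
    have hsum2 : c 1 * ((Real.sin (m*θ) : ℝ) : ℂ) = 0 := by
      calc c 1 * ((Real.sin (m*θ):ℝ):ℂ)
          = c 1 * ((∑ j ∈ range (m+1), (Real.cos θ)^j * (Real.sin θ)^(m-j) * (Nat.choose m j) *
              (if Odd (m - j) then (-1:ℝ)^((m - j)/2) else 0) : ℝ) : ℂ) := by
            rw [← trig θ m]
        _ = ∑ j ∈ range (m+1), c 1 * ((((Real.cos θ)^j * (Real.sin θ)^(m-j) * (Nat.choose m j) *
              (if Odd (m - j) then (-1:ℝ)^((m-j)/2) else 0)) : ℝ) : ℂ) := by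
            rw [Complex.ofReal_sum, Finset.mul_sum]
        _ = ∑ j ∈ range (m+1),
            (m:ℂ) * (c (m-j) * ((Real.cos θ:ℝ):ℂ)^(m-(m-j)) * ((Real.sin θ:ℝ):ℂ)^(m-j)) :=
            (Finset.sum_congr rfl hterm).symm
        _ = 0 := hrefl
    have hne : ((Real.sin (m*θ):ℝ):ℂ) ≠ 0 := Complex.ofReal_ne_zero.2 hsin
    exact (mul_eq_zero.1 hsum2).resolve_right hne
  intro j hj
  rcases Nat.even_or_odd j with ⟨k, hk⟩ | ⟨k, hk⟩
  · rw [hk, show k+k = 2*k by ring]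
    exact heven k (by omega)
  · rw [hk]
    have h5 := hodd k (by omega)
    rw [hc1, mul_zero] at h5
    have hm0 : ((m:ℕ):ℂ) ≠ 0 := Nat.cast_ne_zero.2 (by omega)
    exact (mul_eq_zero.1 h5).resolve_left hm0

end Stmt4Aux


open Stmt4Aux Finset

/-- Two nodal lines intersecting at the origin at angle `θ₀ = απ` with the rational-angle
avoidance condition: the eigenfunction vanishes at `0` up to order `n`. -/
theorem stmt4
    (Ω : Set (ℝ × ℝ)) (hΩ : IsOpen Ω)
    (lam : ℝ) (hlam : 0 < lam)
    (u : ℝ × ℝ → ℂ)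
    (hu_an : AnalyticOnNhd ℝ u Ω)
    (hu_eq : ∀ x ∈ Ω, pd1 (pd1 u) x + pd2 (pd2 u) x + (lam : ℂ) * u x = 0)
    (α : ℝ) (hα : α ∈ Set.Ioo (0 : ℝ) 1)
    (θ₀ : ℝ) (hθ₀ : θ₀ = α * Real.pi)
    (h : ℝ) (hh : 0 < h)
    (hdisk : ∀ x : ℝ × ℝ, x.1 ^ 2 + x.2 ^ 2 ≤ h ^ 2 → x ∈ Ω)
    (n : ℕ) (hn : 3 ≤ n)
    (hnodal_m : ∀ r : ℝ, 0 ≤ r → r ≤ h → u (r, 0) = 0)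
    (hnodal_p : ∀ r : ℝ, 0 ≤ r → r ≤ h → u (r * Real.cos θ₀, r * Real.sin θ₀) = 0)
    (hαpq : ∀ p q : ℕ, 1 ≤ p → p ≤ n - 1 → 1 ≤ q → q ≤ p - 1 → α ≠ (q : ℝ) / (p : ℝ)) :
    ∀ k : ℕ, k < n → iteratedFDeriv ℝ k u (0, 0) = 0 := by
  classical
  have h0Ω : ((0 : ℝ×ℝ)) ∈ Ω := by
    apply hdisk 0
    norm_num
    positivity
  obtain ⟨p, hpAt⟩ := hu_an _ h0Ω
  obtain ⟨R, hpR⟩ := hpAt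
  set δ₀ : ℝ≥0 := Real.toNNReal (h/2) with hδ₀def
  have hδ₀ : 0 < δ₀ := Real.toNNReal_pos.2 (by linarith)
  have hε : (0:ℝ≥0∞) < min R ↑δ₀ := lt_min hpR.r_pos (by exact_mod_cast hδ₀)
  obtain ⟨δ, hδ0, hδlt⟩ := ENNReal.lt_iff_exists_nnreal_btwn.1 hε
  have hδpos : 0 < δ := by exact_mod_cast hδ0
  have hδR : (↑δ : ℝ≥0∞) ≤ R := (lt_of_lt_of_le hδlt (min_le_left _ _)).le
  have hδh : (δ:ℝ) ≤ h/2 := by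
    have h1 : (↑δ : ℝ≥0∞) < ↑δ₀ := lt_of_lt_of_le hδlt (min_le_right _ _)
    have h2 : δ ≤ δ₀ := by exact_mod_cast h1.le
    calc (δ:ℝ) ≤ (δ₀:ℝ) := by exact_mod_cast h2
    _ = h/2 := Real.coe_toNNReal _ (by linarith)
  have hp : HasFPowerSeriesOnBall u p 0 (↑δ : ℝ≥0∞) := hpR.mono hδ0 hδR
  have hBΩ : Metric.eball (0 : ℝ×ℝ) (↑δ : ℝ≥0∞) ⊆ Ω := by
    intro z hz
    rw [EMetric.mem_ball, edist_zero_right] at hz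
    have hz1 : ‖z‖ < (δ:ℝ) := by exact_mod_cast hz
    apply hdisk
    have e1 : |z.1| ≤ ‖z‖ := by
      rw [← Real.norm_eq_abs]
      exact norm_fst_le z
    have e2 : |z.2| ≤ ‖z‖ := by
      rw [← Real.norm_eq_abs]
      exact norm_snd_le z
    nlinarith [sq_abs z.1, sq_abs z.2, abs_nonneg z.1, abs_nonneg z.2, norm_nonneg z]
  have hdiag1 : ∀ k, p k (fun _ => (((1:ℝ),(0:ℝ)) : ℝ×ℝ)) = 0 := by
    apply ray_vanish hu_an hh hdisk hδpos hp
    · norm_num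
    · intro t ht1 ht2
      have he : t • (((1:ℝ),(0:ℝ)) : ℝ×ℝ) = ((t:ℝ), (0:ℝ)) := by
        simp [Prod.smul_mk]
      rw [he]
      exact hnodal_m t ht1 ht2
  have hdiag2 : ∀ k, p k (fun _ => ((Real.cos θ₀, Real.sin θ₀) : ℝ×ℝ)) = 0 := by
    apply ray_vanish hu_an hh hdisk hδpos hp
    · simp [Real.cos_sq_add_sin_sq]
    · intro t ht1 ht2
      have he : t • ((Real.cos θ₀, Real.sin θ₀) : ℝ×ℝ)
          = ((t * Real.cos θ₀ : ℝ), (t * Real.sin θ₀ : ℝ)) := by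
        simp [Prod.smul_mk]
      rw [he]
      exact hnodal_p t ht1 ht2
  have hsinm : ∀ m : ℕ, 1 ≤ m → m < n → Real.sin (m * θ₀) ≠ 0 := by
    intro m hm1 hmn hcontra
    rw [Real.sin_eq_zero_iff] at hcontra
    obtain ⟨k, hk⟩ := hcontra
    rw [hθ₀] at hk
    have hπ := Real.pi_ne_zero
    have hka : (k:ℝ) = m * α := by
      have h2 : (k:ℝ) * Real.pi = ((m:ℝ) * α) * Real.pi := by
        rw [hk]; ring
      exact mul_right_cancel₀ hπ h2
    have hm0 : (0:ℝ) < (m:ℝ) := by exact_mod_cast hm1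
    have hkpos : (0:ℝ) < (k:ℝ) := by
      rw [hka]; exact mul_pos hm0 hα.1
    have hklt : (k:ℝ) < (m:ℝ) := by
      rw [hka]
      nlinarith [hα.2]
    have hk1 : 1 ≤ k := by
      have : (0:ℤ) < k := by exact_mod_cast hkpos
      omega
    have hk2 : k ≤ (m:ℤ) - 1 := by
      have : k < (m:ℤ) := by exact_mod_cast hklt
      omega
    set q := k.toNat with hqdef
    have hq : ((q:ℕ):ℝ) = (k:ℝ) := by
      rw [hqdef]
      exact_mod_cast congrArg Int.cast (Int.toNat_of_nonneg (by omega : (0:ℤ) ≤ k))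
    apply hαpq m q hm1 (by omega) (by omega) (by omega)
    rw [eq_div_iff (by positivity : ((m:ℕ):ℝ) ≠ 0)]
    nlinarith [hka, hq]
  have hmain : ∀ m, m < n → ∀ y : ℝ×ℝ, p m (fun _ => y) = 0 := by
    intro m
    induction m using Nat.strong_induction_on with
    | _ m IH =>
      intro hmn
      rcases Nat.eq_zero_or_pos m with hm0 | hm1
      · subst hm0
        intro y
        have h0 := hdiag1 0
        have he : (fun _ : Fin 0 => y) = (fun _ : Fin 0 => (((1:ℝ),(0:ℝ)) : ℝ×ℝ)) := by
          funext i
          exact absurd i.2 (by omega)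
        rw [he]
        exact h0
      · set c : ℕ → ℂ := fun j => ∑ s ∈ Finset.powersetCard (m - j) (Finset.univ : Finset (Fin m)),
          p m (fun i => if i ∈ s then (((1:ℝ),(0:ℝ)) : ℝ×ℝ) else ((0:ℝ),(1:ℝ))) with hcdef
        have hc : ∀ y : ℝ×ℝ, p m (fun _ => y)
            = ∑ j ∈ Finset.range (m+1), c j * (y.1:ℂ)^(m-j) * (y.2:ℂ)^j :=
          fun y => diag_expansion m (p m) y
        have hc0 : c 0 = 0 := by
          have h1 := hdiag1 m
          rw [hc (((1:ℝ),(0:ℝ)) : ℝ×ℝ)] at h1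
          rw [Finset.sum_eq_single 0] at h1
          · simpa using h1
          · intro b _ hb0
            simp [zero_pow hb0]
          · intro hb
            exact absurd (Finset.mem_range.2 (by omega)) hb
        have hDrec : ∀ j, j + 2 ≤ m →
            ((m-j : ℕ):ℂ) * ((m-j-1 : ℕ):ℂ) * c j + ((j+2 : ℕ):ℂ) * ((j+1 : ℕ):ℂ) * c (j+2)
              = 0 := by
          intro j hj2
          have hm2 : 2 ≤ m := by omega
          have hharm := harmonic_rec lam hu_eq hδpos hp hBΩ m hm2
            (fun j' hj' y' => IH j' hj' (lt_trans hj' hmn) y')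
          have hQfun : (fun z : ℝ×ℝ => p m (fun _ => z))
              = (fun w : ℝ×ℝ => ∑ j ∈ Finset.range (m+1),
                  c j * ((w.1:ℂ)^(m-j) * (w.2:ℂ)^j)) := by
            funext z
            rw [hc z]
            exact Finset.sum_congr rfl fun _ _ => by ring
          rw [hQfun] at hharm
          have hpd1F : pd1 (fun w : ℝ×ℝ => ∑ j ∈ Finset.range (m+1),
                c j * ((w.1:ℂ)^(m-j) * (w.2:ℂ)^j))
              = fun w => ∑ j ∈ Finset.range (m+1),
                  (c j * ((m-j:ℕ):ℂ)) * ((w.1:ℂ)^(m-j-1) * (w.2:ℂ)^j) :=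
            pd1_poly (m+1) c (fun j => m-j) (fun j => j)
          have hpd11F : pd1 (fun w : ℝ×ℝ => ∑ j ∈ Finset.range (m+1),
                (c j * ((m-j:ℕ):ℂ)) * ((w.1:ℂ)^(m-j-1) * (w.2:ℂ)^j))
              = fun w => ∑ j ∈ Finset.range (m+1),
                  ((c j * ((m-j:ℕ):ℂ)) * ((m-j-1:ℕ):ℂ)) * ((w.1:ℂ)^(m-j-1-1) * (w.2:ℂ)^j) :=
            pd1_poly (m+1) (fun j => c j * ((m-j:ℕ):ℂ)) (fun j => m-j-1) (fun j => j)
          have hpd2F : pd2 (fun w : ℝ×ℝ => ∑ j ∈ Finset.range (m+1),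
                c j * ((w.1:ℂ)^(m-j) * (w.2:ℂ)^j))
              = fun w => ∑ j ∈ Finset.range (m+1),
                  (c j * ((j:ℕ):ℂ)) * ((w.1:ℂ)^(m-j) * (w.2:ℂ)^(j-1)) :=
            pd2_poly (m+1) c (fun j => m-j) (fun j => j)
          have hpd22F : pd2 (fun w : ℝ×ℝ => ∑ j ∈ Finset.range (m+1),
                (c j * ((j:ℕ):ℂ)) * ((w.1:ℂ)^(m-j) * (w.2:ℂ)^(j-1)))
              = fun w => ∑ j ∈ Finset.range (m+1),
                  ((c j * ((j:ℕ):ℂ)) * ((j-1:ℕ):ℂ)) * ((w.1:ℂ)^(m-j) * (w.2:ℂ)^(j-1-1)) :=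
            pd2_poly (m+1) (fun j => c j * ((j:ℕ):ℂ)) (fun j => m-j) (fun j => j-1)
          have e1 : ∀ w : ℝ×ℝ, pd1 (pd1 (fun w : ℝ×ℝ => ∑ j ∈ Finset.range (m+1),
                c j * ((w.1:ℂ)^(m-j) * (w.2:ℂ)^j))) w
              = ∑ j ∈ Finset.range (m+1),
                  (c j * ((m-j:ℕ):ℂ) * ((m-j-1:ℕ):ℂ)) * ((w.1:ℂ)^(m-j-1-1) * (w.2:ℂ)^j) := by
            intro w
            rw [hpd1F]
            exact congrFun hpd11F w
          have e2 : ∀ w : ℝ×ℝ, pd2 (pd2 (fun w : ℝ×ℝ => ∑ j ∈ Finset.range (m+1),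
                c j * ((w.1:ℂ)^(m-j) * (w.2:ℂ)^j))) w
              = ∑ j ∈ Finset.range (m+1),
                  (c j * ((j:ℕ):ℂ) * ((j-1:ℕ):ℂ)) * ((w.1:ℂ)^(m-j) * (w.2:ℂ)^(j-1-1)) := by
            intro w
            rw [hpd2F]
            exact congrFun hpd22F w
          have hclean : ∀ t : ℝ,
              (∑ j ∈ Finset.range (m+1),
                (c j * ((m-j:ℕ):ℂ) * ((m-j-1:ℕ):ℂ)) * (t:ℂ)^j)
              + (∑ j ∈ Finset.range (m+1),
                (c j * ((j:ℕ):ℂ) * ((j-1:ℕ):ℂ)) * (t:ℂ)^(j-1-1))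
              = 0 := by
            intro t
            have h6 := hharm (((1:ℝ), (t:ℝ)) : ℝ×ℝ)
            rw [e1, e2] at h6
            calc (∑ j ∈ Finset.range (m+1),
                (c j * ((m-j:ℕ):ℂ) * ((m-j-1:ℕ):ℂ)) * (t:ℂ)^j)
              + (∑ j ∈ Finset.range (m+1),
                (c j * ((j:ℕ):ℂ) * ((j-1:ℕ):ℂ)) * (t:ℂ)^(j-1-1))
                = (∑ j ∈ Finset.range (m+1),
                    (c j * ((m-j:ℕ):ℂ) * ((m-j-1:ℕ):ℂ)) *
                      (((((1:ℝ), (t:ℝ)) : ℝ×ℝ).1:ℂ)^(m-j-1-1)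
                        * ((((1:ℝ), (t:ℝ)) : ℝ×ℝ).2:ℂ)^j))
                  + (∑ j ∈ Finset.range (m+1),
                    (c j * ((j:ℕ):ℂ) * ((j-1:ℕ):ℂ)) *
                      (((((1:ℝ), (t:ℝ)) : ℝ×ℝ).1:ℂ)^(m-j)
                        * ((((1:ℝ), (t:ℝ)) : ℝ×ℝ).2:ℂ)^(j-1-1))) := by
                  congr 1
                  · refine Finset.sum_congr rfl fun j _ => ?_
                    push_cast
                    ring
                  · refine Finset.sum_congr rfl fun j _ => ?_
                    push_cast
                    ring
              _ = 0 := h6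
          exact extract_rec m hm1 c hclean j hj2
        have hQ0 : ∑ j ∈ Finset.range (m+1),
            c j * ((Real.cos θ₀ : ℝ):ℂ)^(m-j) * ((Real.sin θ₀:ℝ):ℂ)^j = 0 := by
          have h8 := hdiag2 m
          rw [hc ((Real.cos θ₀, Real.sin θ₀) : ℝ×ℝ)] at h8
          simpa using h8
        have hcall := solve_coeffs m hm1 c θ₀ hc0 hDrec hQ0 (hsinm m hm1 hmn)
        intro y
        rw [hc y]
        apply Finset.sum_eq_zero
        intro j hj
        rw [hcall j (by
          have := Finset.mem_range.1 hj
          omega)]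
        ring
  intro k hk
  have hz : ∀ j ≤ k, trunc p n j = 0 := by
    intro j hj
    simp only [trunc]
    rw [if_pos (by omega)]
  have ht := trunc_hasSeries hp n (fun j hj y => hmain j hj y)
  exact iterzero k ht hz
end

section
/- Let Ω, λ, u, α, θ₀, h, Γ_h^−, Γ_h^+, ν⁻, ν⁺ be as in the context, and let n ≥ 3 be an integer. Suppose Γ_h^− and Γ_h^+ are singular lines of u, i.e., ∇u(x)·ν⁻ = 0 for all x ∈ Γ_h^− and ∇u(x)·ν⁺ = 0 for all x ∈ Γ_h^+. If u(0) = 0 and α ≠ q/p for all integers p, q with 1 ≤ p ≤ n−1 and 1 ≤ q ≤ p−1, then u vanishes at 0 up to order n, i.e., every partial derivative of u of order strictly less than n vanishes at 0. -/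
open Set Filter

noncomputable def dd (v : ℝ × ℝ) (f : ℝ × ℝ → ℂ) : ℝ × ℝ → ℂ := fun x => fderiv ℝ f x v

noncomputable def dds : List (ℝ × ℝ) → (ℝ × ℝ → ℂ) → (ℝ × ℝ → ℂ)
  | [], f => f
  | v :: l, f => dds l (dd v f)

lemma dd_eq_comp (v : ℝ × ℝ) (f : ℝ × ℝ → ℂ) :
    dd v f = (⇑(ContinuousLinearMap.apply ℝ ℂ v)) ∘ (fderiv ℝ f) := rfl

variable {Ω : Set (ℝ × ℝ)}

lemma an_dd {f : ℝ × ℝ → ℂ} (hf : AnalyticOnNhd ℝ f Ω) (v : ℝ × ℝ) :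
    AnalyticOnNhd ℝ (dd v f) Ω := fun x hx =>
  ((ContinuousLinearMap.apply ℝ ℂ v).analyticAt _).comp (hf.fderiv x hx)

lemma an_dds {f : ℝ × ℝ → ℂ} : ∀ (l : List (ℝ × ℝ)), AnalyticOnNhd ℝ f Ω →
    AnalyticOnNhd ℝ (dds l f) Ω
  | [], hf => hf
  | v :: l, hf => an_dds l (an_dd hf v)

lemma dd_congr (hΩ : IsOpen Ω) {f g : ℝ × ℝ → ℂ} (hfg : EqOn f g Ω) (v : ℝ × ℝ) :
    EqOn (dd v f) (dd v g) Ω := by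
  intro x hx
  have hev : f =ᶠ[nhds x] g := Filter.eventuallyEq_of_mem (hΩ.mem_nhds hx) hfg
  simp only [dd]
  rw [hev.fderiv_eq]

lemma dds_congr (hΩ : IsOpen Ω) {f g : ℝ × ℝ → ℂ} : ∀ (l : List (ℝ × ℝ)), EqOn f g Ω →
    EqOn (dds l f) (dds l g) Ω
  | [], hfg => hfg
  | v :: l, hfg => dds_congr hΩ l (dd_congr hΩ hfg v)

lemma dd_comm (hΩ : IsOpen Ω) {f : ℝ × ℝ → ℂ} (hf : AnalyticOnNhd ℝ f Ω) (v w : ℝ × ℝ)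
    {x : ℝ × ℝ} (hx : x ∈ Ω) : dd w (dd v f) x = dd v (dd w f) x := by
  have hdiff : DifferentiableAt ℝ (fderiv ℝ f) x := (hf.fderiv x hx).differentiableAt
  have key : ∀ v w : ℝ × ℝ, dd w (dd v f) x = fderiv ℝ (fderiv ℝ f) x w v := by
    intro v w
    have hv : HasFDerivAt (dd v f)
        ((ContinuousLinearMap.apply ℝ ℂ v).comp (fderiv ℝ (fderiv ℝ f) x)) x :=
      ((ContinuousLinearMap.apply ℝ ℂ v).hasFDerivAt).comp x hdiff.hasFDerivAt
    simp only [dd]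
    rw [hv.fderiv]
    rfl
  rw [key v w, key w v]
  exact (((hf x hx).contDiffAt (n := 2)).isSymmSndFDerivAt (by simp)).eq w v

lemma dds_perm (hΩ : IsOpen Ω) {l₁ l₂ : List (ℝ × ℝ)} (hp : l₁.Perm l₂) :
    ∀ {f : ℝ × ℝ → ℂ}, AnalyticOnNhd ℝ f Ω → EqOn (dds l₁ f) (dds l₂ f) Ω := by
  induction hp with
  | nil => exact fun _ _ hx => rfl
  | cons v p IH => exact fun hf => IH (an_dd hf v)
  | swap v w l =>
      intro f hf
      exact dds_congr hΩ l (fun z hz => dd_comm hΩ hf w v hz)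
  | trans p₁ p₂ IH₁ IH₂ => exact fun hf x hx => (IH₁ hf hx).trans (IH₂ hf hx)
lemma iFD_snoc (hΩ : IsOpen Ω) {f : ℝ × ℝ → ℂ} (hf : AnalyticOnNhd ℝ f Ω) {x : ℝ × ℝ}
    (hx : x ∈ Ω) (j : ℕ) (m : Fin j → ℝ × ℝ) (v : ℝ × ℝ) :
    iteratedFDeriv ℝ (j + 1) f x (Fin.snoc m v) = iteratedFDeriv ℝ j (dd v f) x m := by
  rw [iteratedFDeriv_succ_apply_right, Fin.init_snoc, Fin.snoc_last]
  have hD : ContDiffOn ℝ (j : WithTop ℕ∞) (fderiv ℝ f) Ω :=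
    (hf.fderiv).contDiffOn hΩ.uniqueDiffOn
  have h1 := (ContinuousLinearMap.apply ℝ ℂ v).iteratedFDerivWithin_comp_left (hD x hx)
    hΩ.uniqueDiffOn hx (le_refl (j : WithTop ℕ∞))
  have e0 : dd v f = (⇑(ContinuousLinearMap.apply ℝ ℂ v)) ∘ (fderiv ℝ f) := rfl
  have e1 : iteratedFDerivWithin ℝ j (dd v f) Ω x = iteratedFDeriv ℝ j (dd v f) x :=
    iteratedFDerivWithin_of_isOpen j hΩ hx
  have e2 : iteratedFDerivWithin ℝ j (fderiv ℝ f) Ω x = iteratedFDeriv ℝ j (fderiv ℝ f) x :=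
    iteratedFDerivWithin_of_isOpen j hΩ hx
  have h2 : iteratedFDeriv ℝ j (dd v f) x
      = (ContinuousLinearMap.apply ℝ ℂ v).compContinuousMultilinearMap
        (iteratedFDeriv ℝ j (fderiv ℝ f) x) := by
    rw [← e1, ← e2, e0, h1]
  rw [h2]
  simp [ContinuousLinearMap.compContinuousMultilinearMap_coe, Function.comp,
    ContinuousLinearMap.apply_apply]

lemma iFD_dds (hΩ : IsOpen Ω) {x : ℝ × ℝ} (hx : x ∈ Ω) :
    ∀ (j : ℕ) (f : ℝ × ℝ → ℂ), AnalyticOnNhd ℝ f Ω → ∀ (m : Fin j → ℝ × ℝ),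
    iteratedFDeriv ℝ j f x m = dds (List.ofFn m).reverse f x := by
  intro j
  induction j with
  | zero =>
      intro f hf m
      rw [iteratedFDeriv_zero_apply]
      rw [List.ofFn_zero]
      rfl
  | succ j IH =>
      intro f hf m
      rw [← Fin.snoc_init_self m, iFD_snoc hΩ hf hx, IH _ (an_dd hf _)]
      have hl : List.ofFn (Fin.snoc (Fin.init m) (m (Fin.last j)) : Fin (j + 1) → ℝ × ℝ)
          = (List.ofFn (Fin.init m)).concat (m (Fin.last j)) := by
        rw [List.ofFn_succ']
        simp only [Fin.snoc_castSucc, Fin.snoc_last]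
      rw [hl]
      simp only [List.concat_eq_append, List.reverse_append, List.reverse_singleton,
        List.singleton_append]
      rfl
lemma line_vanish (hΩ : IsOpen Ω) {f : ℝ × ℝ → ℂ} (hf : AnalyticOnNhd ℝ f Ω) {h : ℝ}
    (hh : 0 < h) (w : ℝ × ℝ)
    (hmem : ∀ r : ℝ, 0 ≤ r → r ≤ h → r • w ∈ Ω)
    (hz : ∀ r : ℝ, 0 ≤ r → r ≤ h → f (r • w) = 0) (j : ℕ) :
    iteratedFDeriv ℝ j f 0 (fun _ : Fin j => w) = 0 := by
  set L : ℝ →L[ℝ] ℝ × ℝ := ContinuousLinearMap.toSpanSingleton ℝ w with hL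
  have hL0 : L 0 = 0 := by simp [hL, ContinuousLinearMap.toSpanSingleton_apply]
  have h0 : (0 : ℝ × ℝ) ∈ Ω := by simpa using hmem 0 le_rfl hh.le
  have hg_an : AnalyticAt ℝ (f ∘ L) 0 := by
    refine AnalyticAt.comp ?_ (L.analyticAt 0)
    rw [hL0]; exact hf 0 h0
  have hev : ∀ᶠ t in nhds (0 : ℝ), (f ∘ L) t = 0 := by
    apply hg_an.frequently_zero_iff_eventually_zero.1
    have h1 : ∀ᶠ t in nhdsWithin (0 : ℝ) (Set.Ioi 0), (f ∘ L) t = 0 := by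
      filter_upwards [Ioc_mem_nhdsGT_of_mem (Set.left_mem_Ico.2 hh)] with t ht
      simpa [hL, ContinuousLinearMap.toSpanSingleton_apply] using hz t ht.1.le ht.2
    exact h1.frequently.filter_mono (nhdsWithin_mono 0 (fun t ht => ne_of_gt ht))
  obtain ⟨V, hVsub, hVopen, hV0⟩ := mem_nhds_iff.1 hev
  have hg0 : iteratedFDeriv ℝ j (f ∘ L) 0 = 0 := by
    rw [← iteratedFDerivWithin_of_isOpen j hVopen hV0]
    have hcongr : iteratedFDerivWithin ℝ j (f ∘ L) V 0
        = iteratedFDerivWithin ℝ j (fun _ => (0 : ℂ)) V 0 :=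
      iteratedFDerivWithin_congr (fun t ht => hVsub ht) hV0 j
    rw [hcongr, iteratedFDerivWithin_of_isOpen j hVopen hV0, iteratedFDeriv_zero_fun]
    rfl
  have hcd : ContDiffOn ℝ (j : WithTop ℕ∞) f Ω := hf.contDiffOn hΩ.uniqueDiffOn
  have hpre : IsOpen (L ⁻¹' Ω) := hΩ.preimage L.continuous
  have h0pre : (0 : ℝ) ∈ L ⁻¹' Ω := by simp [Set.mem_preimage, hL0, h0]
  have hLmem : L 0 ∈ Ω := by rw [hL0]; exact h0
  have hcr := L.iteratedFDerivWithin_comp_right hcd hΩ.uniqueDiffOn hpre.uniqueDiffOn hLmem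
    (le_refl (j : WithTop ℕ∞))
  have key : iteratedFDeriv ℝ j (f ∘ L) 0 (fun _ : Fin j => (1 : ℝ))
      = iteratedFDeriv ℝ j f 0 (fun _ : Fin j => w) := by
    rw [← iteratedFDerivWithin_of_isOpen j hpre h0pre, hcr]
    rw [hL0, iteratedFDerivWithin_of_isOpen j hΩ h0]
    simp [ContinuousMultilinearMap.compContinuousLinearMap_apply, hL,
      ContinuousLinearMap.toSpanSingleton_apply]
  rw [hg0] at key
  exact key.symm.trans rfl

lemma harm (hΩ : IsOpen Ω) {u : ℝ × ℝ → ℂ} (hu_an : AnalyticOnNhd ℝ u Ω) {lam : ℝ}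
    (hu_eq : ∀ x ∈ Ω, dd (1,0) (dd (1,0) u) x + dd (0,1) (dd (0,1) u) x + (lam : ℂ) * u x = 0)
    (h0 : (0 : ℝ × ℝ) ∈ Ω) (j : ℕ)
    (hlow : iteratedFDeriv ℝ j u 0 = 0) (m : Fin j → ℝ × ℝ) :
    iteratedFDeriv ℝ j (dd (1,0) (dd (1,0) u)) 0 m
      + iteratedFDeriv ℝ j (dd (0,1) (dd (0,1) u)) 0 m = 0 := by
  have an1 : AnalyticOnNhd ℝ (dd (1,0) (dd (1,0) u)) Ω := an_dd (an_dd hu_an _) _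
  have an2 : AnalyticOnNhd ℝ (dd (0,1) (dd (0,1) u)) Ω := an_dd (an_dd hu_an _) _
  have hEq : EqOn (dd (1,0) (dd (1,0) u) + dd (0,1) (dd (0,1) u)) ((-(lam : ℂ)) • u) Ω := by
    intro x hx
    have := hu_eq x hx
    simp only [Pi.add_apply, Pi.smul_apply, smul_eq_mul]
    linear_combination this
  have c1 : ContDiffOn ℝ (j : WithTop ℕ∞) (dd (1,0) (dd (1,0) u)) Ω :=
    an1.contDiffOn hΩ.uniqueDiffOn
  have c2 : ContDiffOn ℝ (j : WithTop ℕ∞) (dd (0,1) (dd (0,1) u)) Ω :=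
    an2.contDiffOn hΩ.uniqueDiffOn
  have cu : ContDiffOn ℝ (j : WithTop ℕ∞) u Ω := hu_an.contDiffOn hΩ.uniqueDiffOn
  have step1 : iteratedFDerivWithin ℝ j (dd (1,0) (dd (1,0) u) + dd (0,1) (dd (0,1) u)) Ω 0
      = iteratedFDerivWithin ℝ j ((-(lam : ℂ)) • u) Ω 0 :=
    iteratedFDerivWithin_congr hEq h0 j
  have step2 := iteratedFDerivWithin_add_apply (𝕜 := ℝ) (c1 0 h0) (c2 0 h0) hΩ.uniqueDiffOn h0
  have step3 := iteratedFDerivWithin_const_smul_apply (𝕜 := ℝ) (a := (-(lam:ℂ))) (cu 0 h0)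
    hΩ.uniqueDiffOn h0
  have e1 := iteratedFDerivWithin_of_isOpen (𝕜 := ℝ) (f := dd (1,0) (dd (1,0) u)) j hΩ h0
  have e2 := iteratedFDerivWithin_of_isOpen (𝕜 := ℝ) (f := dd (0,1) (dd (0,1) u)) j hΩ h0
  have eu := iteratedFDerivWithin_of_isOpen (𝕜 := ℝ) (f := u) j hΩ h0
  have : iteratedFDeriv ℝ j (dd (1,0) (dd (1,0) u)) 0 m
      + iteratedFDeriv ℝ j (dd (0,1) (dd (0,1) u)) 0 m
      = (-(lam : ℂ)) • iteratedFDeriv ℝ j u 0 m := by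
    rw [← e1, ← e2, ← eu]
    calc iteratedFDerivWithin ℝ j (dd (1,0) (dd (1,0) u)) Ω 0 m
        + iteratedFDerivWithin ℝ j (dd (0,1) (dd (0,1) u)) Ω 0 m
        = iteratedFDerivWithin ℝ j (dd (1,0) (dd (1,0) u) + dd (0,1) (dd (0,1) u)) Ω 0 m := by
          rw [step2]; rfl
      _ = iteratedFDerivWithin ℝ j ((-(lam : ℂ)) • u) Ω 0 m := by rw [step1]
      _ = (-(lam : ℂ)) • iteratedFDerivWithin ℝ j u Ω 0 m := by rw [step3]; rfl
  rw [this, hlow]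
  simp
def bv : Bool → ℝ × ℝ := fun s => if s then (0, 1) else (1, 0)

def cnt {k : ℕ} (b : Fin k → Bool) : ℕ := ∑ i, if b i then 1 else 0

def patt (k t : ℕ) : Fin k → Bool := fun i => decide (t ≤ (i : ℕ))

lemma cnt_le {k : ℕ} (b : Fin k → Bool) : cnt b ≤ k := by
  calc cnt b ≤ ∑ _i : Fin k, 1 := Finset.sum_le_sum (fun i _ => by split <;> omega)
    _ = k := by simp

lemma count_ofFn {k : ℕ} (b : Fin k → Bool) (a : Bool) :
    (List.ofFn b).count a = ∑ i, if b i = a then 1 else 0 := by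
  induction k with
  | zero => simp
  | succ k IH =>
      rw [List.ofFn_succ, List.count_cons, IH (fun i => b i.succ), Fin.sum_univ_succ]
      cases hb : b 0 <;> cases a <;> simp [hb] <;> omega

lemma perm_of_cnt_eq {k : ℕ} {b₁ b₂ : Fin k → Bool} (hc : cnt b₁ = cnt b₂) :
    (List.ofFn b₁).Perm (List.ofFn b₂) := by
  rw [List.perm_iff_count]
  intro a
  have key : ∀ b : Fin k → Bool, (∑ i, if b i = true then 1 else 0)
      + (∑ i, if b i = false then 1 else 0) = k := by
    intro b
    rw [← Finset.sum_add_distrib]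
    calc (∑ i : Fin k, ((if b i = true then 1 else 0) + if b i = false then 1 else 0))
        = ∑ _i : Fin k, 1 := Finset.sum_congr rfl (fun i _ => by cases h : b i <;> simp [h])
      _ = k := by simp
  have h1 : (∑ i, if b₁ i = true then 1 else 0) = (∑ i, if b₂ i = true then 1 else 0) := hc
  cases a with
  | true => rw [count_ofFn, count_ofFn]; exact h1
  | false =>
      rw [count_ofFn, count_ofFn]
      have := key b₁; have := key b₂; omega

lemma cnt_patt (k t : ℕ) : cnt (patt k t) = k - t := by
  induction k with
  | zero => simp [cnt]
  | succ k IH =>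
      rw [cnt, Fin.sum_univ_castSucc]
      have h1 : (∑ i : Fin k, if patt (k+1) t i.castSucc then 1 else 0) = k - t := by
        rw [← IH]; rfl
      rw [h1]
      simp only [patt, Fin.val_last, decide_eq_true_eq]
      split <;> omega

lemma patt_succ (K t : ℕ) (h : t ≤ K) : patt (K + 1) t = Fin.snoc (patt K t) true := by
  funext i
  refine Fin.lastCases ?_ (fun i' => ?_) i
  · rw [Fin.snoc_last]; simp [patt, h]
  · rw [Fin.snoc_castSucc]; rfl

section engine
variable {k : ℕ} (A : ContinuousMultilinearMap ℝ (fun _ : Fin k => ℝ × ℝ) ℂ)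

lemma a_formula
    (hsym : ∀ b₁ b₂ : Fin k → Bool, cnt b₁ = cnt b₂ → A (bv ∘ b₁) = A (bv ∘ b₂))
    (harec : ∀ c, c + 2 ≤ k → A (bv ∘ patt k (k - (c+2))) = - A (bv ∘ patt k (k - c)))
    (ha1 : A (bv ∘ patt k (k - 1)) = 0) :
    ∀ c, c ≤ k → A (bv ∘ patt k (k - c))
      = ((Complex.I ^ c).re : ℝ) • A (bv ∘ patt k k) := by
  intro c
  induction c using Nat.strong_induction_on with
  | _ c IH =>
    match c with
    | 0 => intro _; simp
    | 1 => intro _; rw [ha1]; simp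
    | (c+2) =>
        intro hck
        rw [harec c (by omega), IH c (by omega) (by omega)]
        have hI : (Complex.I ^ (c + 2)) = -(Complex.I ^ c) := by
          rw [pow_add, Complex.I_sq]; ring
        rw [hI]
        simp [Complex.neg_re, neg_smul]

lemma engine
    (hk : 1 ≤ k)
    (hsym : ∀ b₁ b₂ : Fin k → Bool, cnt b₁ = cnt b₂ → A (bv ∘ b₁) = A (bv ∘ b₂))
    (harec : ∀ c, c + 2 ≤ k → A (bv ∘ patt k (k - (c+2))) = - A (bv ∘ patt k (k - c)))
    (ha1 : A (bv ∘ patt k (k - 1)) = 0) :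
    ∀ b : Fin k → Bool, A (bv ∘ b)
      = ((Complex.I ^ cnt b).re : ℝ) • A (bv ∘ (fun _ => false)) := by
  intro b
  have hc : cnt b ≤ k := cnt_le b
  have h1 : A (bv ∘ b) = A (bv ∘ patt k (k - cnt b)) := by
    apply hsym; rw [cnt_patt]; omega
  have h0 : A (bv ∘ patt k k) = A (bv ∘ (fun _ => false)) := by
    apply hsym; rw [cnt_patt]; simp [cnt]
  rw [h1, a_formula A hsym harec ha1 (cnt b) hc, h0]
end engine
lemma cnt_compl {k : ℕ} (S : Finset (Fin k)) :
    cnt (fun i => decide (i ∉ S)) = Sᶜ.card := by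
  rw [cnt]
  have : ∀ i : Fin k, (if decide (i ∉ S) then (1:ℕ) else 0) = if i ∈ Sᶜ then 1 else 0 := by
    intro i; simp [Finset.mem_compl]
  rw [Finset.sum_congr rfl (fun i _ => this i), Finset.sum_ite_mem, Finset.univ_inter,
    Finset.sum_const, smul_eq_mul, mul_one]

lemma expand {k : ℕ} (A : ContinuousMultilinearMap ℝ (fun _ : Fin k => ℝ × ℝ) ℂ)
    (hbasis : ∀ b : Fin k → Bool, A (bv ∘ b)
      = ((Complex.I ^ cnt b).re : ℝ) • A (bv ∘ (fun _ => false)))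
    (m : Fin k → ℝ × ℝ) :
    A m = ((∏ i, (((m i).1 : ℂ) + ((m i).2 : ℂ) * Complex.I)).re : ℝ)
      • A (bv ∘ (fun _ => false)) := by
  classical
  set a0 := A (bv ∘ (fun _ => false)) with ha0
  set P : Fin k → ℝ × ℝ := fun i => (m i).1 • bv false with hP
  set Q : Fin k → ℝ × ℝ := fun i => (m i).2 • bv true with hQ
  have hm : m = P + Q := by
    funext i
    simp [hP, hQ, bv, Prod.ext_iff]
  have step1 : A m = ∑ S : Finset (Fin k), A (S.piecewise P Q) := by
    rw [hm]
    exact A.toMultilinearMap.map_add_univ P Q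
  have step2 : ∀ S : Finset (Fin k), A (S.piecewise P Q)
      = ((∏ i ∈ S, (m i).1) * ∏ i ∈ Sᶜ, (m i).2) • ((Complex.I ^ (Sᶜ.card)).re : ℝ) • a0 := by
    intro S
    have hpw : S.piecewise P Q
        = fun i => (if i ∈ S then (m i).1 else (m i).2) • bv (decide (i ∉ S)) := by
      funext i
      by_cases hi : i ∈ S <;> simp [Finset.piecewise, hi, hP, hQ]
    rw [hpw, A.map_smul_univ,
      show (fun i => bv (decide (i ∉ S))) = (bv ∘ fun i => decide (i ∉ S)) from rfl,
      hbasis (fun i => decide (i ∉ S)), cnt_compl]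
    congr 1
    rw [Finset.prod_ite (fun i => (m i).1) (fun i => (m i).2)]
    congr 1
    · congr 1; ext i; simp
    · congr 1; ext i; simp
  have step3 : (∏ i, (((m i).1 : ℂ) + ((m i).2 : ℂ) * Complex.I)).re
      = ∑ S : Finset (Fin k),
        ((∏ i ∈ S, (m i).1) * ∏ i ∈ Sᶜ, (m i).2) * (Complex.I ^ (Sᶜ.card)).re := by
    rw [Finset.prod_add, ← Finset.powerset_univ]
    rw [Complex.re_sum]
    apply Finset.sum_congr rfl
    intro S _
    have hsd : Finset.univ \ S = Sᶜ := by rw [Finset.compl_eq_univ_sdiff]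
    rw [hsd, Finset.prod_mul_distrib, Finset.prod_const]
    have hterm : (∏ i ∈ S, ((m i).1 : ℂ)) * ((∏ i ∈ Sᶜ, ((m i).2 : ℂ)) * Complex.I ^ Sᶜ.card)
        = ((((∏ i ∈ S, (m i).1) * ∏ i ∈ Sᶜ, (m i).2) : ℝ) : ℂ) * Complex.I ^ Sᶜ.card := by
      push_cast; ring
    rw [hterm, Complex.re_ofReal_mul]
  rw [step1, Finset.sum_congr rfl (fun S _ => step2 S), step3]
  rw [Finset.sum_smul]
  apply Finset.sum_congr rfl
  intro S _
  rw [smul_smul]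


lemma cnt_snoc {K : ℕ} (b : Fin K → Bool) (v : Bool) :
    cnt (Fin.snoc b v) = cnt b + if v then 1 else 0 := by
  rw [cnt, Fin.sum_univ_castSucc]
  simp only [Fin.snoc_castSucc, Fin.snoc_last]
  rfl

/-- Two singular lines intersecting at the origin at angle `θ₀ = απ` with the rational-angle
avoidance condition and `u 0 = 0`: the eigenfunction vanishes at `0` up to order `n`. -/
theorem stmt5
    (Ω : Set (ℝ × ℝ)) (hΩ : IsOpen Ω)
    (lam : ℝ) (hlam : 0 < lam)
    (u : ℝ × ℝ → ℂ)
    (hu_an : AnalyticOnNhd ℝ u Ω)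
    (hu_eq : ∀ x ∈ Ω, pd1 (pd1 u) x + pd2 (pd2 u) x + (lam : ℂ) * u x = 0)
    (α : ℝ) (hα : α ∈ Set.Ioo (0 : ℝ) 1)
    (θ₀ : ℝ) (hθ₀ : θ₀ = α * Real.pi)
    (h : ℝ) (hh : 0 < h)
    (hdisk : ∀ x : ℝ × ℝ, x.1 ^ 2 + x.2 ^ 2 ≤ h ^ 2 → x ∈ Ω)
    (n : ℕ) (hn : 3 ≤ n)
    (hsing_m : ∀ r : ℝ, 0 ≤ r → r ≤ h → fderiv ℝ u (r, 0) (0, -1) = 0)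
    (hsing_p : ∀ r : ℝ, 0 ≤ r → r ≤ h →
      fderiv ℝ u (r * Real.cos θ₀, r * Real.sin θ₀) (-Real.sin θ₀, Real.cos θ₀) = 0)
    (hu0 : u (0, 0) = 0)
    (hαpq : ∀ p q : ℕ, 1 ≤ p → p ≤ n - 1 → 1 ≤ q → q ≤ p - 1 → α ≠ (q : ℝ) / (p : ℝ)) :
    ∀ k : ℕ, k < n → iteratedFDeriv ℝ k u (0, 0) = 0 := by
  have h0 : (0 : ℝ × ℝ) ∈ Ω := hdisk (0, 0) (by simpa using sq_nonneg h)
  intro k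
  induction k using Nat.strong_induction_on with
  | _ k IH =>
    intro hkn
    match k, IH, hkn with
    | 0, IH, hkn =>
        apply ContinuousMultilinearMap.ext
        intro m
        rw [iteratedFDeriv_zero_apply, ContinuousMultilinearMap.zero_apply]
        exact hu0
    | (j+1), IH, hkn =>
        show iteratedFDeriv ℝ (j+1) u 0 = 0
        -- symmetry
        have hsym : ∀ b₁ b₂ : Fin (j+1) → Bool, cnt b₁ = cnt b₂ →
            iteratedFDeriv ℝ (j+1) u 0 (bv ∘ b₁) = iteratedFDeriv ℝ (j+1) u 0 (bv ∘ b₂) := by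
          intro b₁ b₂ hc
          rw [iFD_dds hΩ h0 _ u hu_an, iFD_dds hΩ h0 _ u hu_an]
          have hperm : ((List.ofFn (bv ∘ b₁)).reverse).Perm ((List.ofFn (bv ∘ b₂)).reverse) := by
            refine (List.reverse_perm _).trans (List.Perm.trans ?_ (List.reverse_perm _).symm)
            rw [← List.map_ofFn (f := b₁) (g := bv), ← List.map_ofFn (f := b₂) (g := bv)]
            exact (perm_of_cnt_eq hc).map bv
          exact dds_perm hΩ hperm hu_an h0
        -- a 1 = 0 (singular line Γ⁻)
        have ha1 : iteratedFDeriv ℝ (j+1) u 0 (bv ∘ patt (j+1) (j+1-1)) = 0 := by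
          have hp : patt (j+1) (j+1-1) = Fin.snoc (patt j j) true := by
            rw [show j + 1 - 1 = j from rfl]
            exact patt_succ j j le_rfl
          have hpf : patt j j = fun _ => false := by
            funext i
            have : ¬ (j ≤ (i : ℕ)) := Nat.not_le.2 i.is_lt
            simp [patt, this]
          rw [hp, hpf, Fin.comp_snoc]
          have hbv : (bv ∘ fun _ : Fin j => false) = fun _ : Fin j => ((1:ℝ),(0:ℝ)) := rfl
          rw [hbv, show bv true = ((0:ℝ),(1:ℝ)) from rfl]
          rw [iFD_snoc hΩ hu_an h0]
          apply line_vanish hΩ (an_dd hu_an _) hh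
          · intro r hr0 hrh
            apply hdisk
            simp only [Prod.smul_mk, smul_eq_mul, mul_one, mul_zero]
            nlinarith
          · intro r hr0 hrh
            have hval := hsing_m r hr0 hrh
            have hneg : ((0:ℝ),(1:ℝ)) = -((0:ℝ),(-1:ℝ)) := by simp
            simp only [dd, Prod.smul_mk, smul_eq_mul, mul_one, mul_zero]
            rw [hneg, map_neg, hval, neg_zero]
        -- the recursion a (c+2) = - a c (harmonicity)
        have harec : ∀ c, c + 2 ≤ j + 1 →
            iteratedFDeriv ℝ (j+1) u 0 (bv ∘ patt (j+1) (j+1-(c+2)))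
              = - iteratedFDeriv ℝ (j+1) u 0 (bv ∘ patt (j+1) (j+1-c)) := by
          intro c hc
          obtain ⟨j', rfl⟩ : ∃ j', j = j' + 1 := ⟨j - 1, by omega⟩
          have hcj' : c ≤ j' := by omega
          have hth : j' + 1 + 1 - (c + 2) = j' - c := by omega
          have e2p : patt (j'+1+1) (j'-c) = Fin.snoc (Fin.snoc (patt j' (j'-c)) true) true := by
            rw [patt_succ (j'+1) (j'-c) (by omega), patt_succ j' (j'-c) (by omega)]
          have hlow : iteratedFDeriv ℝ j' u 0 = 0 := IH j' (by omega) (by omega)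
          have hRHS : iteratedFDeriv ℝ (j'+1+1) u 0 (bv ∘ patt (j'+1+1) (j'+1+1-c))
              = iteratedFDeriv ℝ (j'+1+1) u 0
                (bv ∘ (Fin.snoc (Fin.snoc (patt j' (j'-c)) false) false)) := by
            apply hsym
            rw [cnt_patt, cnt_snoc, cnt_snoc, cnt_patt]
            simp
            omega
          rw [hth, e2p, hRHS, Fin.comp_snoc, Fin.comp_snoc, Fin.comp_snoc, Fin.comp_snoc]
          rw [show bv true = ((0:ℝ),(1:ℝ)) from rfl, show bv false = ((1:ℝ),(0:ℝ)) from rfl]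
          rw [iFD_snoc hΩ hu_an h0, iFD_snoc hΩ (an_dd hu_an _) h0]
          rw [iFD_snoc hΩ hu_an h0, iFD_snoc hΩ (an_dd hu_an _) h0]
          have hharm := harm hΩ hu_an (fun x hx => hu_eq x hx) h0 j' hlow
            (bv ∘ patt j' (j'-c))
          exact eq_neg_of_add_eq_zero_left (by linear_combination hharm)
        -- engine
        have hbasis := engine (iteratedFDeriv ℝ (j+1) u 0) (by omega) hsym harec ha1
        -- singular line Γ⁺
        set eθ : ℝ × ℝ := (Real.cos θ₀, Real.sin θ₀) with heθ
        set ν : ℝ × ℝ := (-Real.sin θ₀, Real.cos θ₀) with hν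
        have hF4 : iteratedFDeriv ℝ (j+1) u 0 (Fin.snoc (fun _ : Fin j => eθ) ν) = 0 := by
          rw [iFD_snoc hΩ hu_an h0]
          apply line_vanish hΩ (an_dd hu_an _) hh
          · intro r hr0 hrh
            apply hdisk
            simp only [heθ, Prod.smul_mk, smul_eq_mul]
            have ht := Real.sin_sq_add_cos_sq θ₀
            have key : (r * Real.cos θ₀)^2 + (r * Real.sin θ₀)^2 = r^2 := by
              linear_combination r^2 * ht
            have hr2 : r^2 ≤ h^2 := by nlinarith
            linarith [key, hr2]
          · intro r hr0 hrh
            have hval := hsing_p r hr0 hrh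
            simp only [dd, heθ, hν, Prod.smul_mk, smul_eq_mul]
            exact hval
        -- evaluate the product
        have hprod : (∏ i : Fin (j+1),
            ((((Fin.snoc (fun _ : Fin j => eθ) ν : Fin (j+1) → ℝ × ℝ) i).1 : ℂ)
              + (((Fin.snoc (fun _ : Fin j => eθ) ν : Fin (j+1) → ℝ × ℝ) i).2 : ℂ) * Complex.I))
            = Complex.I * Complex.exp ((((j:ℝ)+1) * θ₀ : ℝ) * Complex.I) := by
          rw [Fin.prod_univ_castSucc]
          have hcs : ∀ i : Fin j, (Fin.snoc (fun _ : Fin j => eθ) ν : Fin (j+1) → ℝ × ℝ) i.castSucc = eθ :=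
            fun i => Fin.snoc_castSucc ..
          have hl : (Fin.snoc (fun _ : Fin j => eθ) ν : Fin (j+1) → ℝ × ℝ) (Fin.last j) = ν := Fin.snoc_last ..
          simp only [hcs, hl]
          have hze : ((eθ.1 : ℂ) + (eθ.2 : ℂ) * Complex.I) = Complex.exp (θ₀ * Complex.I) := by
            rw [Complex.exp_mul_I, heθ]
            simp [Complex.ofReal_cos, Complex.ofReal_sin]
          have hzn : ((ν.1 : ℂ) + (ν.2 : ℂ) * Complex.I)
              = Complex.I * Complex.exp (θ₀ * Complex.I) := by
            rw [Complex.exp_mul_I, hν]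
            simp only [Complex.ofReal_neg, Complex.ofReal_cos, Complex.ofReal_sin]
            have : Complex.I * Complex.I = -1 := Complex.I_mul_I
            ring_nf
            rw [Complex.I_sq]
            ring
          rw [Finset.prod_const, hze, hzn]
          rw [show ((((j:ℝ)+1) * θ₀ : ℝ) : ℂ) * Complex.I = ((j:ℂ)+1) * ((θ₀:ℂ) * Complex.I) by
            push_cast; ring]
          rw [show ((j:ℂ)+1) = ((j+1 : ℕ) : ℂ) by push_cast; ring]
          rw [Complex.exp_nat_mul]
          simp only [Finset.card_univ, Fintype.card_fin]
          ring
        have hre : (Complex.I * Complex.exp ((((j:ℝ)+1) * θ₀ : ℝ) * Complex.I)).re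
            = - Real.sin (((j:ℝ)+1) * θ₀) := by
          have hgen : ∀ x : ℝ, (Complex.I * Complex.exp ((x:ℂ) * Complex.I)).re = - Real.sin x := by
            intro x
            rw [Complex.exp_mul_I]
            simp [Complex.mul_re, Complex.mul_im, Complex.sin_ofReal_re, Complex.cos_ofReal_im,
              Complex.sin_ofReal_im, Complex.cos_ofReal_re]
          exact hgen _
        -- sin ≠ 0
        have hsin : Real.sin (((j:ℝ)+1) * θ₀) ≠ 0 := by
          intro hs
          rw [Real.sin_eq_zero_iff] at hs
          obtain ⟨mz, hmz⟩ := hs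
          rw [hθ₀] at hmz
          have hpi : Real.pi ≠ 0 := Real.pi_ne_zero
          have hmza : (mz : ℝ) = ((j:ℝ)+1) * α := by
            have : (mz : ℝ) * Real.pi = (((j:ℝ)+1) * α) * Real.pi := by linarith [hmz]
            exact mul_right_cancel₀ hpi this
          have hα0 : 0 < α := hα.1
          have hα1 : α < 1 := hα.2
          have hmzpos : (0:ℝ) < (mz:ℝ) := by
            rw [hmza]; positivity
          have hmzlt : (mz:ℝ) < (j:ℝ)+1 := by
            rw [hmza]
            nlinarith
          have h1mz : 1 ≤ mz := by exact_mod_cast hmzpos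
          have hmzj : mz ≤ (j:ℤ) := by
            have : (mz:ℝ) < ((j:ℤ):ℝ) + 1 := by push_cast; linarith
            have := (Int.lt_iff_add_one_le).1 (by exact_mod_cast this : mz < (j:ℤ) + 1)
            omega
          set q : ℕ := mz.toNat with hq
          have hqmz : (q : ℤ) = mz := Int.toNat_of_nonneg (by omega)
          have happ := hαpq (j+1) q (by omega) (by omega) (by omega) (by omega)
          have hqr : (q : ℝ) = (mz : ℝ) := by exact_mod_cast congrArg (fun z : ℤ => (z:ℝ)) hqmz
          apply happ
          rw [eq_div_iff (by positivity : ((j+1 : ℕ):ℝ) ≠ 0), hqr, hmza]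
          push_cast
          ring
        -- conclude a0 = 0
        have ha0 : iteratedFDeriv ℝ (j+1) u 0 (bv ∘ (fun _ : Fin (j+1) => false)) = 0 := by
          have hx := expand (iteratedFDeriv ℝ (j+1) u 0) hbasis (Fin.snoc (fun _ : Fin j => eθ) ν)
          rw [hF4, hprod, hre] at hx
          rcases smul_eq_zero.1 hx.symm with hcoef | ha0
          · exact absurd (neg_eq_zero.1 hcoef) hsin
          · exact ha0
        apply ContinuousMultilinearMap.ext
        intro m
        rw [expand (iteratedFDeriv ℝ (j+1) u 0) hbasis m, ha0]
        simp
end
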